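/- arXiv:2005.07867 — 8 statements merged into one kernel-verified Lean document; each statement's English description precedes it below -/
import Mathlib

section
/- A non-empty domain of linear orders D ⊆ L(A) on a finite set A is a Condorcet domain (i.e., the majority relation of every odd profile over D is transitive) if and only if D satisfies a complete set of never conditions, that is, for every 3-element subset {a,b,c} ⊆ A there exist x ∈ {a,b,c} and i ∈ {1,2,3} such that no order in D restricted to {a,b,c} ranks x in position i. -/
/-! Linear orders on a finite set `A` are encoded as duplicate-free lists
(top alternative first) whose set of entries is `A`. -/

variable {α β : Type*}

/-- `w` is a (strict) linear order on `A`, written from top to bottom. -/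
def IsLinOrd [DecidableEq α] (A : Finset α) (w : List α) : Prop :=
  w.Nodup ∧ w.toFinset = A

/-- Restriction of the order `w` to the set `B`. -/
def restr [DecidableEq α] (B : Finset α) (w : List α) : List α :=
  w.filter (fun x => decide (x ∈ B))

/-- Strict majority relation of a profile `P` (a list of linear orders):
`a` beats `b` iff strictly more orders of `P` rank `a` above `b`. -/
def Maj [DecidableEq α] (P : List (List α)) (a b : α) : Prop :=
  P.countP (fun w => decide (w.idxOf a < w.idxOf b)) >
    P.countP (fun w => decide (w.idxOf b < w.idxOf a))

/-- `D` is a Condorcet domain on `A`: all members are linear orders on `A` and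
the majority relation of every odd profile over `D` is transitive. -/
def IsCondorcet [DecidableEq α] (A : Finset α) (D : Set (List α)) : Prop :=
  (∀ w ∈ D, IsLinOrd A w) ∧
    ∀ P : List (List α), (∀ w ∈ P, w ∈ D) → Odd P.length →
      ∀ a ∈ A, ∀ b ∈ A, ∀ c ∈ A, Maj P a b → Maj P b c → Maj P a c

/-- The never condition `x N_{a,b,c} i` (1-based position `i`): no order of `D`
restricted to `{a,b,c}` has `x` in the `i`-th position. -/
def Never [DecidableEq α] (D : Set (List α)) (a b c x : α) (i : ℕ) : Prop :=
  ∀ w ∈ D, (restr {a, b, c} w)[i - 1]? ≠ some x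

/-- `D` is a peak-pit domain on `A`: every triple satisfies a never-top or a
never-bottom condition. -/
def PeakPit [DecidableEq α] (A : Finset α) (D : Set (List α)) : Prop :=
  ∀ a ∈ A, ∀ b ∈ A, ∀ c ∈ A, a ≠ b → a ≠ c → b ≠ c →
    ∃ x ∈ ({a, b, c} : Finset α), Never D a b c x 1 ∨ Never D a b c x 3

/-- Concatenation `D1 ⊙ D2` of two domains (all of `A` ranked above all of `B`). -/
def concatDom (D1 D2 : Set (List α)) : Set (List α) :=
  {w | ∃ x ∈ D1, ∃ y ∈ D2, w = x ++ y}

/-- The set `u ⊕ v` of all shuffles of `u ∈ L(A)` and `v ∈ L(B)`. -/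
def shuffles [DecidableEq α] (A B : Finset α) (u v : List α) : Set (List α) :=
  {w | IsLinOrd (A ∪ B) w ∧ restr A w = u ∧ restr B w = v}

/-- The tensor product `(D1 ⊗ D2)(u,v)` of Danilov–Karzanov–Koshevoy. -/
def tensor [DecidableEq α] (A B : Finset α) (D1 D2 : Set (List α))
    (u v : List α) : Set (List α) :=
  concatDom D1 D2 ∪ shuffles A B u v

/-- `D` has maximal width: it contains a pair of completely reversed orders. -/
def MaxWidth (D : Set (List α)) : Prop :=
  ∃ w ∈ D, w.reverse ∈ D

/-- `w'` is obtained from `w` by one swap of adjacent alternatives. -/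
def AdjSwap (w w' : List α) : Prop :=
  ∃ (l r : List α) (x y : α), w = l ++ x :: y :: r ∧ w' = l ++ y :: x :: r

/-- `D` is semi-connected: some order `w ∈ D` is joined to its reverse by a path
inside `D` of adjacent transpositions in which each pair of alternatives is
swapped exactly once (a maximal chain in the weak Bruhat order, of length
`C(|A|,2)`). -/
def SemiConnected (A : Finset α) (D : Set (List α)) : Prop :=
  ∃ (w : List α) (c : ℕ → List α), w ∈ D ∧ c 0 = w ∧
    c (A.card.choose 2) = w.reverse ∧
    (∀ i, i ≤ A.card.choose 2 → c i ∈ D) ∧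
    (∀ i, i < A.card.choose 2 → AdjSwap (c i) (c (i + 1)))

/-- `D` is a maximal Condorcet domain on `A`. -/
def MaxCondorcet [DecidableEq α] (A : Finset α) (D : Set (List α)) : Prop :=
  IsCondorcet A D ∧ ∀ D' : Set (List α), IsCondorcet A D' → D ⊆ D' → D' ⊆ D

/-- Cardinality of the Fishburn domain `F_n` (Galambos–Reiner formula). -/
def fishCard (n : ℕ) : ℕ :=
  (n + 3) * 2 ^ (n - 3) -
    (if Even n then (2 * n - 3) * (n - 2).choose (n / 2 - 1) / 2
     else (n - 1) / 2 * (n - 1).choose ((n - 1) / 2))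


/-! ### Auxiliary lemmas for `stmt_0` -/

lemma pair_sublist_indexOf [DecidableEq α] {l : List α} {x y : α}
    (h : [x, y].Sublist l) (hn : l.Nodup) : l.idxOf x < l.idxOf y := by
  induction l with
  | nil => simp at h
  | cons a t ih =>
    rcases List.sublist_cons_iff.mp h with h' | ⟨r, hr, hr'⟩
    · have hx : x ∈ t := h'.subset (by simp)
      have hy : y ∈ t := h'.subset (by simp)
      have hxa : x ≠ a := fun e => (List.nodup_cons.mp hn).1 (e ▸ hx)
      have hya : y ≠ a := fun e => (List.nodup_cons.mp hn).1 (e ▸ hy)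
      rw [List.idxOf_cons_ne _ hxa.symm, List.idxOf_cons_ne _ hya.symm]
      exact Nat.succ_lt_succ (ih h' (List.nodup_cons.mp hn).2)
    · obtain ⟨rfl, rfl⟩ : x = a ∧ r = [y] := by
        cases hr; exact ⟨rfl, rfl⟩
      have hy : y ∈ t := hr'.subset (by simp)
      have hya : y ≠ x := fun e => (List.nodup_cons.mp hn).1 (e ▸ hy)
      rw [List.idxOf_cons_self, List.idxOf_cons_ne _ hya.symm]
      exact Nat.succ_pos _

lemma filter_eq_triple [DecidableEq α] {w : List α} {p : α → Bool} {x y z : α}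
    (hw : w.Nodup) (hx : x ∈ w) (hy : y ∈ w) (hz : z ∈ w)
    (hp : ∀ u ∈ w, (p u = true ↔ (u = x ∨ u = y ∨ u = z)))
    (h1 : w.idxOf x < w.idxOf y) (h2 : w.idxOf y < w.idxOf z) :
    w.filter p = [x, y, z] := by
  have hxy : x ≠ y := fun e => by subst e; omega
  have hxz : x ≠ z := fun e => by subst e; omega
  have hyz : y ≠ z := fun e => by subst e; omega
  have hnd : (w.filter p).Nodup := hw.filter p
  have htf : (w.filter p).toFinset = ({x, y, z} : Finset α) := by
    ext u
    simp only [List.mem_toFinset, List.mem_filter, Finset.mem_insert, Finset.mem_singleton]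
    constructor
    · rintro ⟨hu, hpu⟩; exact (hp u hu).mp hpu
    · rintro (rfl | rfl | rfl)
      · exact ⟨hx, (hp _ hx).mpr (Or.inl rfl)⟩
      · exact ⟨hy, (hp _ hy).mpr (Or.inr (Or.inl rfl))⟩
      · exact ⟨hz, (hp _ hz).mpr (Or.inr (Or.inr rfl))⟩
  have hlen : (w.filter p).length = 3 := by
    rw [← List.toFinset_card_of_nodup hnd, htf]
    rw [Finset.card_insert_of_notMem (by simp [hxy, hxz]),
      Finset.card_insert_of_notMem (by simp [hyz]), Finset.card_singleton]
  obtain ⟨u, v, s, he⟩ := List.length_eq_three.mp hlen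
  have hsub : (w.filter p).Sublist w := List.filter_sublist (l := w)
  have h2s : [u, v].Sublist (w.filter p) := by
    rw [he]; exact (List.cons_sublist_cons).mpr ((List.cons_sublist_cons).mpr (List.nil_sublist _))
  have h2s' : [v, s].Sublist (w.filter p) := by
    rw [he]
    exact List.sublist_cons_of_sublist u
      ((List.cons_sublist_cons).mpr ((List.cons_sublist_cons).mpr (List.nil_sublist _)))
  have huv : w.idxOf u < w.idxOf v := pair_sublist_indexOf (h2s.trans hsub) hw
  have hvs : w.idxOf v < w.idxOf s := pair_sublist_indexOf (h2s'.trans hsub) hw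
  have hu : u = x ∨ u = y ∨ u = z := by
    have : u ∈ w.filter p := by rw [he]; simp
    exact (hp u (List.mem_filter.mp this).1).mp (List.mem_filter.mp this).2
  have hv : v = x ∨ v = y ∨ v = z := by
    have : v ∈ w.filter p := by rw [he]; simp
    exact (hp v (List.mem_filter.mp this).1).mp (List.mem_filter.mp this).2
  have hs : s = x ∨ s = y ∨ s = z := by
    have : s ∈ w.filter p := by rw [he]; simp
    exact (hp s (List.mem_filter.mp this).1).mp (List.mem_filter.mp this).2
  rw [he]
  rcases hu with rfl | rfl | rfl <;> rcases hv with rfl | rfl | rfl <;>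
    rcases hs with rfl | rfl | rfl <;> first | rfl | omega

lemma restr_eq_triple [DecidableEq α] {w : List α} {B : Finset α} {x y z : α}
    (hw : w.Nodup) (hx : x ∈ w) (hy : y ∈ w) (hz : z ∈ w)
    (hB : ∀ u, u ∈ B ↔ u = x ∨ u = y ∨ u = z)
    (h1 : w.idxOf x < w.idxOf y) (h2 : w.idxOf y < w.idxOf z) :
    restr B w = [x, y, z] :=
  filter_eq_triple hw hx hy hz (fun u _ => by simpa using hB u) h1 h2

lemma restr_index [DecidableEq α] {w : List α} {B : Finset α} {x y z : α}
    (hw : w.Nodup) (he : restr B w = [x, y, z]) :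
    w.idxOf x < w.idxOf y ∧ w.idxOf y < w.idxOf z := by
  have hsub : ([x, y, z] : List α).Sublist w := by
    rw [← he]; exact List.filter_sublist (l := w)
  have s1 : ([x, y] : List α).Sublist [x, y, z] :=
    (List.cons_sublist_cons).mpr ((List.cons_sublist_cons).mpr (List.nil_sublist _))
  have s2 : ([y, z] : List α).Sublist [x, y, z] := List.sublist_cons_self x [y, z]
  exact ⟨pair_sublist_indexOf (s1.trans hsub) hw, pair_sublist_indexOf (s2.trans hsub) hw⟩

lemma countP_or_split (l : List β) (p q r : β → Bool)
    (h : ∀ w ∈ l, (p w = true ↔ (q w = true ∨ r w = true)) ∧ ¬(q w = true ∧ r w = true)) :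
    l.countP p = l.countP q + l.countP r := by
  induction l with
  | nil => simp
  | cons a t ih =>
    have ha := h a (List.mem_cons_self)
    have iht := ih (fun w hw => h w (List.mem_cons_of_mem _ hw))
    simp only [List.countP_cons]
    cases hq : q a <;> cases hr : r a <;> cases hpv : p a <;> simp_all <;> omega

lemma countP_or_split3 (l : List β) (p q r s : β → Bool)
    (h : ∀ w ∈ l, (p w = true ↔ (q w = true ∨ r w = true ∨ s w = true)) ∧
      ¬(q w = true ∧ r w = true) ∧ ¬(q w = true ∧ s w = true) ∧ ¬(r w = true ∧ s w = true)) :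
    l.countP p = l.countP q + l.countP r + l.countP s := by
  have h1 : l.countP p = l.countP q + l.countP (fun w => r w || s w) :=
    countP_or_split l p q _ (fun w hw => by
      obtain ⟨h1, h2, h3, h4⟩ := h w hw
      simp only [Bool.or_eq_true]
      exact ⟨by tauto, by tauto⟩)
  have h2 : l.countP (fun w => r w || s w) = l.countP r + l.countP s :=
    countP_or_split l _ r s (fun w hw => by
      obtain ⟨h1, h2, h3, h4⟩ := h w hw
      simp only [Bool.or_eq_true]
      exact ⟨by tauto, h4⟩)
  omega

/-- Count of voters in `P` ranking `x` above `y` above `z`. -/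
def tcnt [DecidableEq α] (P : List (List α)) (x y z : α) : ℕ :=
  P.countP (fun w => decide (w.idxOf x < w.idxOf y) && decide (w.idxOf y < w.idxOf z))

lemma maj_split [DecidableEq α] {P : List (List α)} (x y z : α)
    (hm : ∀ w ∈ P, w.Nodup ∧ x ∈ w ∧ y ∈ w ∧ z ∈ w)
    (hxy : x ≠ y) (hxz : x ≠ z) (hyz : y ≠ z) :
    P.countP (fun w => decide (w.idxOf x < w.idxOf y)) =
      tcnt P x y z + tcnt P x z y + tcnt P z x y := by
  unfold tcnt
  apply countP_or_split3
  intro w hw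
  obtain ⟨hnd, hxw, hyw, hzw⟩ := hm w hw
  have d1 : w.idxOf x ≠ w.idxOf y := fun e => hxy ((List.idxOf_inj (y := _) hxw).mp e)
  have d2 : w.idxOf x ≠ w.idxOf z := fun e => hxz ((List.idxOf_inj (y := _) hxw).mp e)
  have d3 : w.idxOf y ≠ w.idxOf z := fun e => hyz ((List.idxOf_inj (y := _) hyw).mp e)
  simp only [Bool.and_eq_true, decide_eq_true_eq]
  omega

lemma tcnt_zero [DecidableEq α] {P : List (List α)} {D : Set (List α)} {a b c x y z v : α}
    {i : ℕ} (hP : ∀ w ∈ P, w ∈ D) (hm : ∀ w ∈ P, w.Nodup ∧ x ∈ w ∧ y ∈ w ∧ z ∈ w)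
    (hB : ∀ u, u ∈ ({a, b, c} : Finset α) ↔ u = x ∨ u = y ∨ u = z)
    (hnev : Never D a b c v i)
    (hv : ([x, y, z] : List α)[i - 1]? = some v) :
    tcnt P x y z = 0 := by
  unfold tcnt
  rw [List.countP_eq_zero]
  intro w hw hcon
  simp only [Bool.and_eq_true, decide_eq_true_eq] at hcon
  obtain ⟨hnd, hxw, hyw, hzw⟩ := hm w hw
  have he := restr_eq_triple hnd hxw hyw hzw hB hcon.1 hcon.2
  exact hnev w (hP w hw) (by rw [he, hv])

lemma cycle_contra [DecidableEq α] {A : Finset α} {D : Set (List α)}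
    (hC : IsCondorcet A D) {x y z : α} (hx : x ∈ A) (hy : y ∈ A) (hz : z ∈ A)
    {w1 w2 w3 : List α} (h1 : w1 ∈ D) (h2 : w2 ∈ D) (h3 : w3 ∈ D)
    (o1a : w1.idxOf x < w1.idxOf y) (o1b : w1.idxOf y < w1.idxOf z)
    (o2a : w2.idxOf y < w2.idxOf z) (o2b : w2.idxOf z < w2.idxOf x)
    (o3a : w3.idxOf z < w3.idxOf x) (o3b : w3.idxOf x < w3.idxOf y) :
    False := by
  have hP : ∀ w ∈ ([w1, w2, w3] : List (List α)), w ∈ D := by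
    intro w hw
    simp only [List.mem_cons, List.not_mem_nil, or_false] at hw
    rcases hw with rfl | rfl | rfl <;> assumption
  have hodd : Odd ([w1, w2, w3] : List (List α)).length := ⟨1, rfl⟩
  have mxy : Maj [w1, w2, w3] x y := by
    simp only [Maj, List.countP_cons, List.countP_nil, decide_eq_true_eq]
    split_ifs <;> omega
  have myz : Maj [w1, w2, w3] y z := by
    simp only [Maj, List.countP_cons, List.countP_nil, decide_eq_true_eq]
    split_ifs <;> omega
  have mzx : Maj [w1, w2, w3] z x := by
    simp only [Maj, List.countP_cons, List.countP_nil, decide_eq_true_eq]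
    split_ifs <;> omega
  have mxz := hC.2 [w1, w2, w3] hP hodd x hx y hy z hz mxy myz
  simp only [Maj] at mxz mzx
  omega


set_option maxHeartbeats 2000000 in
/-- a non-empty domain of linear orders on `A` is a Condorcet
domain iff it satisfies a complete set of never conditions. -/
theorem stmt_0 [DecidableEq α] (A : Finset α) (D : Set (List α))
    (hne : D.Nonempty) (hlin : ∀ w ∈ D, IsLinOrd A w) :
    IsCondorcet A D ↔
      ∀ a ∈ A, ∀ b ∈ A, ∀ c ∈ A, a ≠ b → a ≠ c → b ≠ c →
        ∃ x ∈ ({a, b, c} : Finset α), ∃ i ∈ ({1, 2, 3} : Finset ℕ),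
          Never D a b c x i := by
  constructor
  · -- Condorcet implies never conditions
    intro hC a ha b hb c hc hab hac hbc
    by_contra hno
    push_neg at hno
    have hsix : ∀ w ∈ D, restr {a, b, c} w = [a, b, c] ∨ restr {a, b, c} w = [a, c, b] ∨
        restr {a, b, c} w = [b, a, c] ∨ restr {a, b, c} w = [b, c, a] ∨
        restr {a, b, c} w = [c, a, b] ∨ restr {a, b, c} w = [c, b, a] := by
      intro w hw
      obtain ⟨hnd, htf⟩ := hlin w hw
      have haw : a ∈ w := by rw [← List.mem_toFinset, htf]; exact ha
      have hbw : b ∈ w := by rw [← List.mem_toFinset, htf]; exact hb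
      have hcw : c ∈ w := by rw [← List.mem_toFinset, htf]; exact hc
      have d1 : w.idxOf a ≠ w.idxOf b := fun e => hab ((List.idxOf_inj (y := _) haw).mp e)
      have d2 : w.idxOf a ≠ w.idxOf c := fun e => hac ((List.idxOf_inj (y := _) haw).mp e)
      have d3 : w.idxOf b ≠ w.idxOf c := fun e => hbc ((List.idxOf_inj (y := _) hbw).mp e)
      have hB1 : ∀ u : α, u ∈ ({a, b, c} : Finset α) ↔ u = a ∨ u = b ∨ u = c := by
        intro u; simp
      have hB2 : ∀ u : α, u ∈ ({a, b, c} : Finset α) ↔ u = a ∨ u = c ∨ u = b := by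
        intro u; simp; tauto
      have hB3 : ∀ u : α, u ∈ ({a, b, c} : Finset α) ↔ u = b ∨ u = a ∨ u = c := by
        intro u; simp; tauto
      have hB4 : ∀ u : α, u ∈ ({a, b, c} : Finset α) ↔ u = b ∨ u = c ∨ u = a := by
        intro u; simp; tauto
      have hB5 : ∀ u : α, u ∈ ({a, b, c} : Finset α) ↔ u = c ∨ u = a ∨ u = b := by
        intro u; simp; tauto
      have hB6 : ∀ u : α, u ∈ ({a, b, c} : Finset α) ↔ u = c ∨ u = b ∨ u = a := by
        intro u; simp; tauto
      by_cases g1 : w.idxOf a < w.idxOf b <;> by_cases g2 : w.idxOf b < w.idxOf c <;>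
        by_cases g3 : w.idxOf a < w.idxOf c
      · exact Or.inl (restr_eq_triple hnd haw hbw hcw hB1 g1 g2)
      · omega
      · exact Or.inr (Or.inl (restr_eq_triple hnd haw hcw hbw hB2 g3 (by omega)))
      · exact Or.inr (Or.inr (Or.inr (Or.inr (Or.inl
          (restr_eq_triple hnd hcw haw hbw hB5 (by omega) g1)))))
      · exact Or.inr (Or.inr (Or.inl (restr_eq_triple hnd hbw haw hcw hB3 (by omega) g3)))
      · exact Or.inr (Or.inr (Or.inr (Or.inl (restr_eq_triple hnd hbw hcw haw hB4 g2 (by omega)))))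
      · omega
      · exact Or.inr (Or.inr (Or.inr (Or.inr (Or.inr
          (restr_eq_triple hnd hcw hbw haw hB6 (by omega) (by omega))))))
    have hmiss1 : (¬∃ w ∈ D, restr {a, b, c} w = [a, b, c]) ∨
        (¬∃ w ∈ D, restr {a, b, c} w = [b, c, a]) ∨
        (¬∃ w ∈ D, restr {a, b, c} w = [c, a, b]) := by
      by_contra h
      push_neg at h
      obtain ⟨⟨w1, hw1, he1⟩, ⟨w2, hw2, he2⟩, ⟨w3, hw3, he3⟩⟩ := h
      have i1 := restr_index (hlin w1 hw1).1 he1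
      have i2 := restr_index (hlin w2 hw2).1 he2
      have i3 := restr_index (hlin w3 hw3).1 he3
      exact cycle_contra hC ha hb hc hw1 hw2 hw3 i1.1 i1.2 i2.1 i2.2 i3.1 i3.2
    have hmiss2 : (¬∃ w ∈ D, restr {a, b, c} w = [a, c, b]) ∨
        (¬∃ w ∈ D, restr {a, b, c} w = [c, b, a]) ∨
        (¬∃ w ∈ D, restr {a, b, c} w = [b, a, c]) := by
      by_contra h
      push_neg at h
      obtain ⟨⟨w1, hw1, he1⟩, ⟨w2, hw2, he2⟩, ⟨w3, hw3, he3⟩⟩ := h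
      have i1 := restr_index (hlin w1 hw1).1 he1
      have i2 := restr_index (hlin w2 hw2).1 he2
      have i3 := restr_index (hlin w3 hw3).1 he3
      exact cycle_contra hC ha hc hb hw1 hw2 hw3 i1.1 i1.2 i2.1 i2.2 i3.1 i3.2
    rcases hmiss1 with m1 | m1 | m1 <;> rcases hmiss2 with m2 | m2 | m2
    · -- missing [a,b,c] and [a,c,b] : a never first
      refine hno a (by simp) 1 (by simp) ?_
      intro w hw
      rcases hsix w hw with h | h | h | h | h | h
      · exact absurd ⟨w, hw, h⟩ m1
      · exact absurd ⟨w, hw, h⟩ m2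
      · rw [h]; intro hcon; simp at hcon; first | exact hab hcon | exact hab hcon.symm | exact hac hcon | exact hac hcon.symm | exact hbc hcon | exact hbc hcon.symm
      · rw [h]; intro hcon; simp at hcon; first | exact hab hcon | exact hab hcon.symm | exact hac hcon | exact hac hcon.symm | exact hbc hcon | exact hbc hcon.symm
      · rw [h]; intro hcon; simp at hcon; first | exact hab hcon | exact hab hcon.symm | exact hac hcon | exact hac hcon.symm | exact hbc hcon | exact hbc hcon.symm
      · rw [h]; intro hcon; simp at hcon; first | exact hab hcon | exact hab hcon.symm | exact hac hcon | exact hac hcon.symm | exact hbc hcon | exact hbc hcon.symm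
    · -- missing [a,b,c] and [c,b,a] : b never middle
      refine hno b (by simp) 2 (by simp) ?_
      intro w hw
      rcases hsix w hw with h | h | h | h | h | h
      · exact absurd ⟨w, hw, h⟩ m1
      · rw [h]; intro hcon; simp at hcon; first | exact hab hcon | exact hab hcon.symm | exact hac hcon | exact hac hcon.symm | exact hbc hcon | exact hbc hcon.symm
      · rw [h]; intro hcon; simp at hcon; first | exact hab hcon | exact hab hcon.symm | exact hac hcon | exact hac hcon.symm | exact hbc hcon | exact hbc hcon.symm
      · rw [h]; intro hcon; simp at hcon; first | exact hab hcon | exact hab hcon.symm | exact hac hcon | exact hac hcon.symm | exact hbc hcon | exact hbc hcon.symm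
      · rw [h]; intro hcon; simp at hcon; first | exact hab hcon | exact hab hcon.symm | exact hac hcon | exact hac hcon.symm | exact hbc hcon | exact hbc hcon.symm
      · exact absurd ⟨w, hw, h⟩ m2
    · -- missing [a,b,c] and [b,a,c] : c never third
      refine hno c (by simp) 3 (by simp) ?_
      intro w hw
      rcases hsix w hw with h | h | h | h | h | h
      · exact absurd ⟨w, hw, h⟩ m1
      · rw [h]; intro hcon; simp at hcon; first | exact hab hcon | exact hab hcon.symm | exact hac hcon | exact hac hcon.symm | exact hbc hcon | exact hbc hcon.symm
      · exact absurd ⟨w, hw, h⟩ m2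
      · rw [h]; intro hcon; simp at hcon; first | exact hab hcon | exact hab hcon.symm | exact hac hcon | exact hac hcon.symm | exact hbc hcon | exact hbc hcon.symm
      · rw [h]; intro hcon; simp at hcon; first | exact hab hcon | exact hab hcon.symm | exact hac hcon | exact hac hcon.symm | exact hbc hcon | exact hbc hcon.symm
      · rw [h]; intro hcon; simp at hcon; first | exact hab hcon | exact hab hcon.symm | exact hac hcon | exact hac hcon.symm | exact hbc hcon | exact hbc hcon.symm
    · -- missing [b,c,a] and [a,c,b] : c never middle
      refine hno c (by simp) 2 (by simp) ?_
      intro w hw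
      rcases hsix w hw with h | h | h | h | h | h
      · rw [h]; intro hcon; simp at hcon; first | exact hab hcon | exact hab hcon.symm | exact hac hcon | exact hac hcon.symm | exact hbc hcon | exact hbc hcon.symm
      · exact absurd ⟨w, hw, h⟩ m2
      · rw [h]; intro hcon; simp at hcon; first | exact hab hcon | exact hab hcon.symm | exact hac hcon | exact hac hcon.symm | exact hbc hcon | exact hbc hcon.symm
      · exact absurd ⟨w, hw, h⟩ m1
      · rw [h]; intro hcon; simp at hcon; first | exact hab hcon | exact hab hcon.symm | exact hac hcon | exact hac hcon.symm | exact hbc hcon | exact hbc hcon.symm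
      · rw [h]; intro hcon; simp at hcon; first | exact hab hcon | exact hab hcon.symm | exact hac hcon | exact hac hcon.symm | exact hbc hcon | exact hbc hcon.symm
    · -- missing [b,c,a] and [c,b,a] : a never third
      refine hno a (by simp) 3 (by simp) ?_
      intro w hw
      rcases hsix w hw with h | h | h | h | h | h
      · rw [h]; intro hcon; simp at hcon; first | exact hab hcon | exact hab hcon.symm | exact hac hcon | exact hac hcon.symm | exact hbc hcon | exact hbc hcon.symm
      · rw [h]; intro hcon; simp at hcon; first | exact hab hcon | exact hab hcon.symm | exact hac hcon | exact hac hcon.symm | exact hbc hcon | exact hbc hcon.symm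
      · rw [h]; intro hcon; simp at hcon; first | exact hab hcon | exact hab hcon.symm | exact hac hcon | exact hac hcon.symm | exact hbc hcon | exact hbc hcon.symm
      · exact absurd ⟨w, hw, h⟩ m1
      · rw [h]; intro hcon; simp at hcon; first | exact hab hcon | exact hab hcon.symm | exact hac hcon | exact hac hcon.symm | exact hbc hcon | exact hbc hcon.symm
      · exact absurd ⟨w, hw, h⟩ m2
    · -- missing [b,c,a] and [b,a,c] : b never first
      refine hno b (by simp) 1 (by simp) ?_
      intro w hw
      rcases hsix w hw with h | h | h | h | h | h
      · rw [h]; intro hcon; simp at hcon; first | exact hab hcon | exact hab hcon.symm | exact hac hcon | exact hac hcon.symm | exact hbc hcon | exact hbc hcon.symm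
      · rw [h]; intro hcon; simp at hcon; first | exact hab hcon | exact hab hcon.symm | exact hac hcon | exact hac hcon.symm | exact hbc hcon | exact hbc hcon.symm
      · exact absurd ⟨w, hw, h⟩ m2
      · exact absurd ⟨w, hw, h⟩ m1
      · rw [h]; intro hcon; simp at hcon; first | exact hab hcon | exact hab hcon.symm | exact hac hcon | exact hac hcon.symm | exact hbc hcon | exact hbc hcon.symm
      · rw [h]; intro hcon; simp at hcon; first | exact hab hcon | exact hab hcon.symm | exact hac hcon | exact hac hcon.symm | exact hbc hcon | exact hbc hcon.symm
    · -- missing [c,a,b] and [a,c,b] : b never third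
      refine hno b (by simp) 3 (by simp) ?_
      intro w hw
      rcases hsix w hw with h | h | h | h | h | h
      · rw [h]; intro hcon; simp at hcon; first | exact hab hcon | exact hab hcon.symm | exact hac hcon | exact hac hcon.symm | exact hbc hcon | exact hbc hcon.symm
      · exact absurd ⟨w, hw, h⟩ m2
      · rw [h]; intro hcon; simp at hcon; first | exact hab hcon | exact hab hcon.symm | exact hac hcon | exact hac hcon.symm | exact hbc hcon | exact hbc hcon.symm
      · rw [h]; intro hcon; simp at hcon; first | exact hab hcon | exact hab hcon.symm | exact hac hcon | exact hac hcon.symm | exact hbc hcon | exact hbc hcon.symm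
      · exact absurd ⟨w, hw, h⟩ m1
      · rw [h]; intro hcon; simp at hcon; first | exact hab hcon | exact hab hcon.symm | exact hac hcon | exact hac hcon.symm | exact hbc hcon | exact hbc hcon.symm
    · -- missing [c,a,b] and [c,b,a] : c never first
      refine hno c (by simp) 1 (by simp) ?_
      intro w hw
      rcases hsix w hw with h | h | h | h | h | h
      · rw [h]; intro hcon; simp at hcon; first | exact hab hcon | exact hab hcon.symm | exact hac hcon | exact hac hcon.symm | exact hbc hcon | exact hbc hcon.symm
      · rw [h]; intro hcon; simp at hcon; first | exact hab hcon | exact hab hcon.symm | exact hac hcon | exact hac hcon.symm | exact hbc hcon | exact hbc hcon.symm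
      · rw [h]; intro hcon; simp at hcon; first | exact hab hcon | exact hab hcon.symm | exact hac hcon | exact hac hcon.symm | exact hbc hcon | exact hbc hcon.symm
      · rw [h]; intro hcon; simp at hcon; first | exact hab hcon | exact hab hcon.symm | exact hac hcon | exact hac hcon.symm | exact hbc hcon | exact hbc hcon.symm
      · exact absurd ⟨w, hw, h⟩ m1
      · exact absurd ⟨w, hw, h⟩ m2
    · -- missing [c,a,b] and [b,a,c] : a never middle
      refine hno a (by simp) 2 (by simp) ?_
      intro w hw
      rcases hsix w hw with h | h | h | h | h | h
      · rw [h]; intro hcon; simp at hcon; first | exact hab hcon | exact hab hcon.symm | exact hac hcon | exact hac hcon.symm | exact hbc hcon | exact hbc hcon.symm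
      · rw [h]; intro hcon; simp at hcon; first | exact hab hcon | exact hab hcon.symm | exact hac hcon | exact hac hcon.symm | exact hbc hcon | exact hbc hcon.symm
      · exact absurd ⟨w, hw, h⟩ m2
      · rw [h]; intro hcon; simp at hcon; first | exact hab hcon | exact hab hcon.symm | exact hac hcon | exact hac hcon.symm | exact hbc hcon | exact hbc hcon.symm
      · exact absurd ⟨w, hw, h⟩ m1
      · rw [h]; intro hcon; simp at hcon; first | exact hab hcon | exact hab hcon.symm | exact hac hcon | exact hac hcon.symm | exact hbc hcon | exact hbc hcon.symm
  · -- never conditions imply Condorcet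
    intro hnever
    refine ⟨hlin, ?_⟩
    intro P hP hodd a ha b hb c hc hab hbc
    by_cases hab' : a = b
    · subst hab'; exact absurd hab (lt_irrefl _)
    by_cases hbc' : b = c
    · subst hbc'; exact hab
    by_cases hac' : a = c
    · subst hac'; exfalso; simp only [Maj] at hab hbc; omega
    obtain ⟨x, hxmem, i, himem, hnev⟩ := hnever a ha b hb c hc hab' hac' hbc'
    by_contra hnac
    have hmem : ∀ w ∈ P, w.Nodup ∧ a ∈ w ∧ b ∈ w ∧ c ∈ w := by
      intro w hw
      obtain ⟨hnd, htf⟩ := hlin w (hP w hw)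
      refine ⟨hnd, ?_, ?_, ?_⟩ <;> rw [← List.mem_toFinset, htf] <;> assumption
    have hm1 : ∀ w ∈ P, w.Nodup ∧ a ∈ w ∧ b ∈ w ∧ c ∈ w := hmem
    have hm2 : ∀ w ∈ P, w.Nodup ∧ b ∈ w ∧ a ∈ w ∧ c ∈ w := fun w hw =>
      ⟨(hmem w hw).1, (hmem w hw).2.2.1, (hmem w hw).2.1, (hmem w hw).2.2.2⟩
    have hm3 : ∀ w ∈ P, w.Nodup ∧ b ∈ w ∧ c ∈ w ∧ a ∈ w := fun w hw =>
      ⟨(hmem w hw).1, (hmem w hw).2.2.1, (hmem w hw).2.2.2, (hmem w hw).2.1⟩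
    have hm4 : ∀ w ∈ P, w.Nodup ∧ c ∈ w ∧ b ∈ w ∧ a ∈ w := fun w hw =>
      ⟨(hmem w hw).1, (hmem w hw).2.2.2, (hmem w hw).2.2.1, (hmem w hw).2.1⟩
    have hm5 : ∀ w ∈ P, w.Nodup ∧ a ∈ w ∧ c ∈ w ∧ b ∈ w := fun w hw =>
      ⟨(hmem w hw).1, (hmem w hw).2.1, (hmem w hw).2.2.2, (hmem w hw).2.2.1⟩
    have hm6 : ∀ w ∈ P, w.Nodup ∧ c ∈ w ∧ a ∈ w ∧ b ∈ w := fun w hw =>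
      ⟨(hmem w hw).1, (hmem w hw).2.2.2, (hmem w hw).2.1, (hmem w hw).2.2.1⟩
    have e1 := maj_split a b c hm1 hab' hac' hbc'
    have e2 := maj_split b a c hm2 (Ne.symm hab') hbc' hac'
    have e3 := maj_split b c a hm3 hbc' (Ne.symm hab') (Ne.symm hac')
    have e4 := maj_split c b a hm4 (Ne.symm hbc') (Ne.symm hac') (Ne.symm hab')
    have e5 := maj_split a c b hm5 hac' hab' (Ne.symm hbc')
    have e6 := maj_split c a b hm6 (Ne.symm hac') (Ne.symm hbc') hab'
    simp only [Maj, not_lt] at hab hbc hnac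
    rw [e1, e2] at hab
    rw [e3, e4] at hbc
    rw [e5, e6] at hnac
    have hB1 : ∀ u : α, u ∈ ({a, b, c} : Finset α) ↔ u = a ∨ u = b ∨ u = c := by
      intro u; simp
    have hB2 : ∀ u : α, u ∈ ({a, b, c} : Finset α) ↔ u = a ∨ u = c ∨ u = b := by
      intro u; simp; tauto
    have hB3 : ∀ u : α, u ∈ ({a, b, c} : Finset α) ↔ u = b ∨ u = a ∨ u = c := by
      intro u; simp; tauto
    have hB4 : ∀ u : α, u ∈ ({a, b, c} : Finset α) ↔ u = b ∨ u = c ∨ u = a := by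
      intro u; simp; tauto
    have hB5 : ∀ u : α, u ∈ ({a, b, c} : Finset α) ↔ u = c ∨ u = a ∨ u = b := by
      intro u; simp; tauto
    have hB6 : ∀ u : α, u ∈ ({a, b, c} : Finset α) ↔ u = c ∨ u = b ∨ u = a := by
      intro u; simp; tauto
    simp only [Finset.mem_insert, Finset.mem_singleton] at hxmem himem
    rcases hxmem with rfl | rfl | rfl <;> rcases himem with rfl | rfl | rfl
    · -- x = a, i = 1 : kills abc, acb
      have z1 := tcnt_zero hP hm1 hB1 hnev rfl
      have z2 := tcnt_zero hP hm5 hB2 hnev rfl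
      omega
    · -- x = a, i = 2 : kills bac, cab
      have z1 := tcnt_zero hP hm2 hB3 hnev rfl
      have z2 := tcnt_zero hP hm6 hB5 hnev rfl
      omega
    · -- x = a, i = 3 : kills bca, cba
      have z1 := tcnt_zero hP hm3 hB4 hnev rfl
      have z2 := tcnt_zero hP hm4 hB6 hnev rfl
      omega
    · -- x = b, i = 1 : kills bac, bca
      have z1 := tcnt_zero hP hm2 hB3 hnev rfl
      have z2 := tcnt_zero hP hm3 hB4 hnev rfl
      omega
    · -- x = b, i = 2 : kills abc, cba
      have z1 := tcnt_zero hP hm1 hB1 hnev rfl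
      have z2 := tcnt_zero hP hm4 hB6 hnev rfl
      omega
    · -- x = b, i = 3 : kills acb, cab
      have z1 := tcnt_zero hP hm5 hB2 hnev rfl
      have z2 := tcnt_zero hP hm6 hB5 hnev rfl
      omega
    · -- x = c, i = 1 : kills cab, cba
      have z1 := tcnt_zero hP hm6 hB5 hnev rfl
      have z2 := tcnt_zero hP hm4 hB6 hnev rfl
      omega
    · -- x = c, i = 2 : kills acb, bca
      have z1 := tcnt_zero hP hm5 hB2 hnev rfl
      have z2 := tcnt_zero hP hm3 hB4 hnev rfl
      omega
    · -- x = c, i = 3 : kills abc, bac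
      have z1 := tcnt_zero hP hm1 hB1 hnev rfl
      have z2 := tcnt_zero hP hm2 hB3 hnev rfl
      omega
end

section
/- If D1 ⊆ L(A) and D2 ⊆ L(B) are Condorcet domains on disjoint finite sets A and B, then the concatenation D1 ⊙ D2 = { xy : x ∈ D1, y ∈ D2 } (the order ranking all of A above all of B, with A ordered by x and B ordered by y) is a Condorcet domain on A ∪ B. -/
/-! Linear orders on a finite set `A` are encoded as duplicate-free lists
(top alternative first) whose set of entries is `A`. -/

variable {α β : Type*}

section AuxStmt1

lemma restrA_concat [DecidableEq α] {A B : Finset α} (hAB : Disjoint A B) {x y : List α}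
    (hxA : x.toFinset = A) (hyB : y.toFinset = B) : restr A (x ++ y) = x := by
  unfold restr
  rw [List.filter_append]
  have e1 : x.filter (fun a => decide (a ∈ A)) = x :=
    List.filter_eq_self.mpr (fun a ha => by
      simp only [decide_eq_true_eq]
      exact hxA ▸ List.mem_toFinset.mpr ha)
  have e2 : y.filter (fun a => decide (a ∈ A)) = [] :=
    List.filter_eq_nil_iff.mpr (fun a ha => by
      simp only [decide_eq_true_eq]
      exact fun h => Finset.disjoint_left.mp hAB h (hyB ▸ List.mem_toFinset.mpr ha))
  rw [e1, e2, List.append_nil]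

lemma restrB_concat [DecidableEq α] {A B : Finset α} (hAB : Disjoint A B) {x y : List α}
    (hxA : x.toFinset = A) (hyB : y.toFinset = B) : restr B (x ++ y) = y := by
  unfold restr
  rw [List.filter_append]
  have e1 : x.filter (fun a => decide (a ∈ B)) = [] :=
    List.filter_eq_nil_iff.mpr (fun a ha => by
      simp only [decide_eq_true_eq]
      exact fun h => Finset.disjoint_right.mp hAB h (hxA ▸ List.mem_toFinset.mpr ha))
  have e2 : y.filter (fun a => decide (a ∈ B)) = y :=
    List.filter_eq_self.mpr (fun a ha => by
      simp only [decide_eq_true_eq]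
      exact hyB ▸ List.mem_toFinset.mpr ha)
  rw [e1, e2, List.nil_append]

/-- the concatenation of two Condorcet domains on disjoint sets
is a Condorcet domain. -/
theorem stmt_1 [DecidableEq α] (A B : Finset α) (hAB : Disjoint A B)
    (D1 D2 : Set (List α))
    (h1 : IsCondorcet A D1) (h2 : IsCondorcet B D2) :
    IsCondorcet (A ∪ B) (concatDom D1 D2) := by
  obtain ⟨h1lin, h1tr⟩ := h1
  obtain ⟨h2lin, h2tr⟩ := h2
  constructor
  · rintro w ⟨x, hx, y, hy, rfl⟩
    obtain ⟨hxn, hxA⟩ := h1lin x hx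
    obtain ⟨hyn, hyB⟩ := h2lin y hy
    refine ⟨List.nodup_append'.mpr ⟨hxn, hyn, ?_⟩, by
      simp [List.toFinset_append, hxA, hyB]⟩
    intro a ha hay
    exact Finset.disjoint_left.mp hAB (hxA ▸ List.mem_toFinset.mpr ha)
      (hyB ▸ List.mem_toFinset.mpr hay)
  · intro P hP hodd a ha b hb c hc hab hbc
    -- master facts about each order in P
    have hw : ∀ w ∈ P, (restr A w ∈ D1 ∧ restr B w ∈ D2) ∧
        (∀ a' ∈ A, w.idxOf a' = (restr A w).idxOf a') ∧
        (∀ b' ∈ B, w.idxOf b' = (restr A w).length + (restr B w).idxOf b') := by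
      intro w hwP
      obtain ⟨x, hx, y, hy, rfl⟩ := hP w hwP
      obtain ⟨hxn, hxA⟩ := h1lin x hx
      obtain ⟨hyn, hyB⟩ := h2lin y hy
      have rA := restrA_concat hAB hxA hyB
      have rB := restrB_concat hAB hxA hyB
      rw [rA, rB]
      refine ⟨⟨hx, hy⟩, ?_, ?_⟩
      · intro a' ha'
        refine List.idxOf_append_of_mem ?_
        rw [← hxA] at ha'
        exact List.mem_toFinset.mp ha' 
      · intro b' hb'
        have hnx : b' ∉ x := fun h =>
          Finset.disjoint_right.mp hAB hb' (hxA ▸ List.mem_toFinset.mpr h)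
        exact List.idxOf_append_of_notMem hnx
    have hPne : P ≠ [] := by
      rintro rfl
      simp at hodd
    -- every order of P ranks every element of A above every element of B
    have hAtop : ∀ a' ∈ A, ∀ b' ∈ B, ∀ w ∈ P, w.idxOf a' < w.idxOf b' := by
      intro a' ha' b' hb' w hwP
      obtain ⟨⟨hrA, _⟩, hiA, hiB⟩ := hw w hwP
      rw [hiA a' ha', hiB b' hb']
      obtain ⟨_, hxA⟩ := h1lin _ hrA
      calc (restr A w).idxOf a' < (restr A w).length :=
            List.idxOf_lt_length_iff.mpr (List.mem_toFinset.mp (by rw [hxA]; exact ha'))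
        _ ≤ (restr A w).length + (restr B w).idxOf b' := Nat.le_add_right _ _
    have hmajAB : ∀ a' ∈ A, ∀ b' ∈ B, Maj P a' b' ∧ ¬ Maj P b' a' := by
      intro a' ha' b' hb'
      have hzero : P.countP (fun w => decide (w.idxOf b' < w.idxOf a')) = 0 := by
        rw [List.countP_eq_zero]
        intro w hwP
        simp only [decide_eq_true_eq, not_lt]
        exact le_of_lt (hAtop a' ha' b' hb' w hwP)
      constructor
      · unfold Maj
        rw [hzero]
        rw [gt_iff_lt, List.countP_pos_iff]
        obtain ⟨w, hwP⟩ := List.exists_mem_of_ne_nil P hPne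
        exact ⟨w, hwP, by simp [hAtop a' ha' b' hb' w hwP]⟩
      · unfold Maj
        rw [hzero]
        omega
    -- transfer of Maj to restricted profiles
    have htransA : ∀ a' ∈ A, ∀ b' ∈ A,
        Maj P a' b' ↔ Maj (P.map (restr A)) a' b' := by
      intro a' ha' b' hb'
      unfold Maj
      rw [List.countP_map, List.countP_map]
      have e1 := List.countP_congr (l := P)
        (p := fun w => decide (w.idxOf a' < w.idxOf b'))
        (q := (fun w => decide (w.idxOf a' < w.idxOf b')) ∘ restr A)
        (fun w hwP => by
          obtain ⟨_, hiA, _⟩ := hw w hwP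
          simp [hiA a' ha', hiA b' hb'])
      have e2 := List.countP_congr (l := P)
        (p := fun w => decide (w.idxOf b' < w.idxOf a'))
        (q := (fun w => decide (w.idxOf b' < w.idxOf a')) ∘ restr A)
        (fun w hwP => by
          obtain ⟨_, hiA, _⟩ := hw w hwP
          simp [hiA a' ha', hiA b' hb'])
      rw [← e1, ← e2]
    have htransB : ∀ a' ∈ B, ∀ b' ∈ B,
        Maj P a' b' ↔ Maj (P.map (restr B)) a' b' := by
      intro a' ha' b' hb'
      unfold Maj
      rw [List.countP_map, List.countP_map]
      have e1 := List.countP_congr (l := P)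
        (p := fun w => decide (w.idxOf a' < w.idxOf b'))
        (q := (fun w => decide (w.idxOf a' < w.idxOf b')) ∘ restr B)
        (fun w hwP => by
          obtain ⟨_, _, hiB⟩ := hw w hwP
          simp [hiB a' ha', hiB b' hb'])
      have e2 := List.countP_congr (l := P)
        (p := fun w => decide (w.idxOf b' < w.idxOf a'))
        (q := (fun w => decide (w.idxOf b' < w.idxOf a')) ∘ restr B)
        (fun w hwP => by
          obtain ⟨_, _, hiB⟩ := hw w hwP
          simp [hiB a' ha', hiB b' hb'])
      rw [← e1, ← e2]
    rcases Finset.mem_union.mp ha with haA | haB <;>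
      rcases Finset.mem_union.mp hb with hbA | hbB <;>
      rcases Finset.mem_union.mp hc with hcA | hcB
    · -- all in A
      rw [htransA a haA c hcA]
      exact h1tr (P.map (restr A))
        (by
          intro w hwm
          obtain ⟨w', hw', rfl⟩ := List.mem_map.mp hwm
          exact ((hw w' hw').1).1)
        (by simpa using hodd) a haA b hbA c hcA
        ((htransA a haA b hbA).mp hab) ((htransA b hbA c hcA).mp hbc)
    · exact (hmajAB a haA c hcB).1
    · exact absurd hbc (hmajAB c hcA b hbB).2
    · exact (hmajAB a haA c hcB).1
    · exact absurd hab (hmajAB b hbA a haB).2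
    · exact absurd hab (hmajAB b hbA a haB).2
    · exact absurd hbc (hmajAB c hcA b hbB).2
    · -- all in B
      rw [htransB a haB c hcB]
      exact h2tr (P.map (restr B))
        (by
          intro w hwm
          obtain ⟨w', hw', rfl⟩ := List.mem_map.mp hwm
          exact ((hw w' hw').1).2)
        (by simpa using hodd) a haB b hbB c hcB
        ((htransB a haB b hbB).mp hab) ((htransB b hbB c hcB).mp hbc)

end AuxStmt1
end

section
/- Let A and B be disjoint finite sets, u ∈ L(A) and v ∈ L(B). Then the set u ⊕ v of all shuffles of u and v is a Condorcet domain on A ∪ B. -/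
/-! Linear orders on a finite set `A` are encoded as duplicate-free lists
(top alternative first) whose set of entries is `A`. -/

variable {α β : Type*}

private lemma idxOf_filter_lt_iff [DecidableEq α] (p : α → Bool) :
    ∀ (l : List α) (a b : α), a ∈ l → p a → p b → a ≠ b →
      (l.idxOf a < l.idxOf b ↔ (l.filter p).idxOf a < (l.filter p).idxOf b) := by
  intro l
  induction l with
  | nil => intro a b ha; simp at ha
  | cons x xs ih =>
    intro a b ha hpa hpb hab
    by_cases hxa : x = a
    · subst hxa
      rw [List.filter_cons_of_pos hpa]
      rw [List.idxOf_cons_self, List.idxOf_cons_self,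
        List.idxOf_cons_ne _ hab, List.idxOf_cons_ne _ hab]
      simp [Nat.succ_pos]
    · by_cases hxb : x = b
      · subst hxb
        rw [List.filter_cons_of_pos hpb]
        rw [List.idxOf_cons_self, List.idxOf_cons_self,
          List.idxOf_cons_ne _ hxa, List.idxOf_cons_ne _ hxa]
        simp
      · have ha' : a ∈ xs := by
          rcases List.mem_cons.mp ha with h | h
          · exact absurd h.symm hxa
          · exact h
        rw [List.idxOf_cons_ne _ hxa, List.idxOf_cons_ne _ hxb]
        by_cases hpx : p x
        · rw [List.filter_cons_of_pos hpx, List.idxOf_cons_ne _ hxa,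
            List.idxOf_cons_ne _ hxb]
          simpa [Nat.succ_lt_succ_iff] using ih a b ha' hpa hpb hab
        · rw [List.filter_cons_of_neg (by simpa using hpx)]
          simpa [Nat.succ_lt_succ_iff] using ih a b ha' hpa hpb hab

private lemma maj_ne [DecidableEq α] {P : List (List α)} {a b : α} (h : Maj P a b) : a ≠ b := by
  rintro rfl; exact lt_irrefl _ h

private lemma maj_asymm [DecidableEq α] {P : List (List α)} {a b : α}
    (h : Maj P a b) (h' : Maj P b a) : False :=
  lt_asymm h h'

private lemma maj_of_allAbove_left [DecidableEq α] {P : List (List α)} {a b c : α}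
    (hall : ∀ w ∈ P, w.idxOf a < w.idxOf b) (h : Maj P b c) : Maj P a c := by
  unfold Maj at h ⊢
  have h1 : P.countP (fun w => decide (w.idxOf b < w.idxOf c)) ≤
      P.countP (fun w => decide (w.idxOf a < w.idxOf c)) := by
    apply List.countP_mono_left
    intro w hw hbc
    have := of_decide_eq_true hbc
    exact decide_eq_true ((hall w hw).trans this)
  have h2 : P.countP (fun w => decide (w.idxOf c < w.idxOf a)) ≤
      P.countP (fun w => decide (w.idxOf c < w.idxOf b)) := by
    apply List.countP_mono_left
    intro w hw hca
    have := of_decide_eq_true hca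
    exact decide_eq_true (this.trans (hall w hw))
  omega

private lemma maj_of_allAbove_right [DecidableEq α] {P : List (List α)} {a b c : α}
    (hall : ∀ w ∈ P, w.idxOf b < w.idxOf c) (h : Maj P a b) : Maj P a c := by
  unfold Maj at h ⊢
  have h1 : P.countP (fun w => decide (w.idxOf a < w.idxOf b)) ≤
      P.countP (fun w => decide (w.idxOf a < w.idxOf c)) := by
    apply List.countP_mono_left
    intro w hw hab
    exact decide_eq_true ((of_decide_eq_true hab).trans (hall w hw))
  have h2 : P.countP (fun w => decide (w.idxOf c < w.idxOf a)) ≤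
      P.countP (fun w => decide (w.idxOf b < w.idxOf a)) := by
    apply List.countP_mono_left
    intro w hw hca
    exact decide_eq_true ((hall w hw).trans (of_decide_eq_true hca))
  omega

/-- If `x, y` lie in `S`, all voters have restriction `s` on `S`, and the majority
ranks `x` above `y`, then every voter ranks `x` above `y`. -/
private lemma same_set_all [DecidableEq α] {S T : Finset α} {s : List α} {P : List (List α)}
    (hsub : S ⊆ T)
    (hP : ∀ w ∈ P, IsLinOrd T w ∧ restr S w = s)
    {x y : α} (hx : x ∈ S) (hy : y ∈ S) (h : Maj P x y) :
    ∀ w ∈ P, w.idxOf x < w.idxOf y := by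
  have hxy : x ≠ y := maj_ne h
  have key : ∀ w ∈ P, (w.idxOf x < w.idxOf y ↔ s.idxOf x < s.idxOf y) := by
    intro w hw
    obtain ⟨⟨hnd, hT⟩, hr⟩ := hP w hw
    have hxw : x ∈ w := by rw [← List.mem_toFinset, hT]; exact hsub hx
    have := idxOf_filter_lt_iff (fun z => decide (z ∈ S)) w x y hxw
      (decide_eq_true hx) (decide_eq_true hy) hxy
    rwa [show w.filter (fun z => decide (z ∈ S)) = s from hr] at this
  -- some voter ranks x above y
  have hpos : 0 < P.countP (fun w => decide (w.idxOf x < w.idxOf y)) :=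
    lt_of_le_of_lt (Nat.zero_le _) h
  obtain ⟨w0, hw0, hw0'⟩ := List.countP_pos_iff.mp hpos
  have hs : s.idxOf x < s.idxOf y := (key w0 hw0).mp (of_decide_eq_true hw0')
  intro w hw
  exact (key w hw).mpr hs

private lemma all_above_of_restr [DecidableEq α] {S T : Finset α} {s : List α}
    {P : List (List α)} (hP : ∀ w ∈ P, IsLinOrd T w ∧ restr S w = s) (hsub : S ⊆ T)
    {x y : α} (hx : x ∈ S) (hy : y ∈ S) (hxy : x ≠ y)
    (h : s.idxOf x < s.idxOf y) : ∀ w ∈ P, w.idxOf x < w.idxOf y := by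
  intro w hw
  obtain ⟨⟨hnd, hT⟩, hr⟩ := hP w hw
  have hxw : x ∈ w := by rw [← List.mem_toFinset, hT]; exact hsub hx
  refine (idxOf_filter_lt_iff (fun z => decide (z ∈ S)) w x y hxw
    (decide_eq_true hx) (decide_eq_true hy) hxy).mpr ?_
  rwa [show w.filter (fun z => decide (z ∈ S)) = s from hr]

private lemma case_extreme [DecidableEq α] {S T : Finset α} {s : List α}
    {P : List (List α)} {a b c : α}
    (hs : IsLinOrd S s) (hsub : S ⊆ T) (hP : ∀ w ∈ P, IsLinOrd T w ∧ restr S w = s)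
    (hnP : P ≠ []) (ha : a ∈ S) (hc : c ∈ S)
    (hab : Maj P a b) (hbc : Maj P b c) : Maj P a c := by
  have hac : a ≠ c := by rintro rfl; exact maj_asymm hab hbc
  have hau : a ∈ s := by rw [← List.mem_toFinset, hs.2]; exact ha
  have hcu : c ∈ s := by rw [← List.mem_toFinset, hs.2]; exact hc
  have hne : s.idxOf a ≠ s.idxOf c :=
    fun h => hac ((List.idxOf_inj hau).mp h)
  rcases lt_or_gt_of_ne hne with h | h
  · have hall := all_above_of_restr hP hsub ha hc hac h
    unfold Maj
    have h1 : P.countP (fun w => decide (w.idxOf a < w.idxOf c)) = P.length :=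
      List.countP_eq_length.mpr (fun w hw => decide_eq_true (hall w hw))
    have h2 : P.countP (fun w => decide (w.idxOf c < w.idxOf a)) = 0 :=
      List.countP_eq_zero.mpr
        (fun w hw h' => absurd (of_decide_eq_true h') (lt_asymm (hall w hw)))
    have h3 : 0 < P.length := List.length_pos_iff.mpr hnP
    omega
  · have hall := all_above_of_restr hP hsub hc ha hac.symm h
    exact (maj_asymm (maj_of_allAbove_left hall hab) hbc).elim

/-- the set `u ⊕ v` of all shuffles of `u` and `v` is a Condorcet
domain on `A ∪ B`. -/
theorem stmt_4 [DecidableEq α] (A B : Finset α) (hAB : Disjoint A B)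
    (u v : List α) (hu : IsLinOrd A u) (hv : IsLinOrd B v) :
    IsCondorcet (A ∪ B) (shuffles A B u v) := by
  refine ⟨fun w hw => hw.1, ?_⟩
  intro P hP hodd a ha b hb c hc hab hbc
  have hPA : ∀ w ∈ P, IsLinOrd (A ∪ B) w ∧ restr A w = u :=
    fun w hw => ⟨(hP w hw).1, (hP w hw).2.1⟩
  have hPB : ∀ w ∈ P, IsLinOrd (A ∪ B) w ∧ restr B w = v :=
    fun w hw => ⟨(hP w hw).1, (hP w hw).2.2⟩
  have hsubA : A ⊆ A ∪ B := Finset.subset_union_left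
  have hsubB : B ⊆ A ∪ B := Finset.subset_union_right
  have hnP : P ≠ [] := by
    rintro rfl; simp only [List.length_nil] at hodd; exact (Nat.not_odd_iff_even.mpr Even.zero) hodd
  by_cases haA : a ∈ A <;> by_cases hbA : b ∈ A <;> by_cases hcA : c ∈ A
  · exact maj_of_allAbove_left (same_set_all hsubA hPA haA hbA hab) hbc
  · exact maj_of_allAbove_left (same_set_all hsubA hPA haA hbA hab) hbc
  · -- a ∈ A, b ∈ B, c ∈ A
    have hbB : b ∈ B := (Finset.mem_union.mp hb).resolve_left hbA
    exact case_extreme hu hsubA hPA hnP haA hcA hab hbc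
  · -- a ∈ A, b ∈ B, c ∈ B
    have hbB : b ∈ B := (Finset.mem_union.mp hb).resolve_left hbA
    have hcB : c ∈ B := (Finset.mem_union.mp hc).resolve_left hcA
    exact maj_of_allAbove_right (same_set_all hsubB hPB hbB hcB hbc) hab
  · -- a ∈ B, b ∈ A, c ∈ A
    exact maj_of_allAbove_right (same_set_all hsubA hPA hbA hcA hbc) hab
  · -- a ∈ B, b ∈ A, c ∈ B
    have haB : a ∈ B := (Finset.mem_union.mp ha).resolve_left haA
    have hcB : c ∈ B := (Finset.mem_union.mp hc).resolve_left hcA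
    exact case_extreme hv hsubB hPB hnP haB hcB hab hbc
  · -- a ∈ B, b ∈ B, c ∈ A
    have haB : a ∈ B := (Finset.mem_union.mp ha).resolve_left haA
    have hbB : b ∈ B := (Finset.mem_union.mp hb).resolve_left hbA
    exact maj_of_allAbove_left (same_set_all hsubB hPB haB hbB hab) hbc
  · have haB : a ∈ B := (Finset.mem_union.mp ha).resolve_left haA
    have hbB : b ∈ B := (Finset.mem_union.mp hb).resolve_left hbA
    exact maj_of_allAbove_left (same_set_all hsubB hPB haB hbB hab) hbc
end

section
/- Let D1 and D2 be Condorcet domains on disjoint finite sets A and B, and let u ∈ D1, v ∈ D2. Then (D1 ⊗ D2)(u,v) := (D1 ⊙ D2) ∪ (u ⊕ v) is a Condorcet domain on A ∪ B, where D1 ⊙ D2 is the set of concatenations xy for x ∈ D1, y ∈ D2, and u ⊕ v is the set of all shuffles of u and v. -/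
/-! Linear orders on a finite set `A` are encoded as duplicate-free lists
(top alternative first) whose set of entries is `A`. -/

variable {α β : Type*}

section Aux

private lemma idx_lt_iff_sublist [DecidableEq α] {w : List α} (hw : w.Nodup)
    {x y : α} (hx : x ∈ w) (hy : y ∈ w) (hxy : x ≠ y) :
    w.idxOf x < w.idxOf y ↔ [x, y].Sublist w := by
  induction w with
  | nil => simp at hx
  | cons h t ih =>
    rcases List.nodup_cons.1 hw with ⟨hht, htn⟩
    by_cases hxh : x = h
    · subst hxh
      have hyt : y ∈ t := by
        rcases List.mem_cons.1 hy with h' | h'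
        · exact absurd h'.symm hxy
        · exact h'
      constructor
      · intro _
        exact (List.singleton_sublist.2 hyt).cons₂ x
      · intro _
        rw [List.idxOf_cons_self, List.idxOf_cons_ne _ hxy]
        exact Nat.succ_pos _
    · by_cases hyh : y = h
      · subst hyh
        constructor
        · intro hlt
          rw [List.idxOf_cons_self] at hlt
          omega
        · intro hs
          exfalso
          cases hs with
          | cons _ hs' => exact hht (hs'.subset (by simp))
          | cons_cons _ hs' => exact hxy rfl
      · have hxt : x ∈ t := by
          rcases List.mem_cons.1 hx with h' | h'
          · exact absurd h' hxh
          · exact h'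
        have hyt : y ∈ t := by
          rcases List.mem_cons.1 hy with h' | h'
          · exact absurd h' hyh
          · exact h'
        have hsub : [x, y].Sublist (h :: t) ↔ [x, y].Sublist t := by
          constructor
          · intro hs
            cases hs with
            | cons _ hs' => exact hs'
            | cons_cons _ hs' => exact absurd rfl hxh
          · exact fun hs => hs.cons h
        rw [List.idxOf_cons_ne _ (fun hh => hxh hh.symm),
            List.idxOf_cons_ne _ (fun hh => hyh hh.symm), hsub]
        rw [Nat.succ_lt_succ_iff]
        exact ih htn hxt hyt

private lemma idx_lt_filter [DecidableEq α] {w : List α} (hw : w.Nodup)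
    {x y : α} (hx : x ∈ w) (hy : y ∈ w) (hxy : x ≠ y)
    (p : α → Bool) (hpx : p x = true) (hpy : p y = true) :
    (w.filter p).idxOf x < (w.filter p).idxOf y ↔ w.idxOf x < w.idxOf y := by
  have hfn : (w.filter p).Nodup := hw.filter p
  have hxf : x ∈ w.filter p := List.mem_filter.2 ⟨hx, hpx⟩
  have hyf : y ∈ w.filter p := List.mem_filter.2 ⟨hy, hpy⟩
  rw [idx_lt_iff_sublist hfn hxf hyf hxy, idx_lt_iff_sublist hw hx hy hxy]
  constructor
  · exact fun hs => hs.trans (List.filter_sublist (l := w))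
  · intro hs
    have h2 := hs.filter p
    simpa [List.filter, hpx, hpy] using h2

private lemma maj_total [DecidableEq α] {P : List (List α)} {x y : α}
    (hall : ∀ w ∈ P, w.Nodup ∧ x ∈ w ∧ y ∈ w) (hxy : x ≠ y) (hodd : Odd P.length) :
    Maj P x y ∨ Maj P y x := by
  unfold Maj
  have hlen := List.length_eq_countP_add_countP
    (fun w : List α => decide (w.idxOf x < w.idxOf y)) (l := P)
  have hco : P.countP (fun w => decide ¬(decide (w.idxOf x < w.idxOf y) = true))
      = P.countP (fun w => decide (w.idxOf y < w.idxOf x)) := by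
    apply List.countP_congr
    intro w hw
    rcases hall w hw with ⟨hn, hxw, hyw⟩
    have hne : w.idxOf x ≠ w.idxOf y := fun h => hxy ((List.idxOf_inj hxw).1 h)
    simp only [decide_eq_true_eq]
    omega
  rw [hco] at hlen
  rcases hodd with ⟨k, hk⟩
  omega

private lemma kill [DecidableEq α] {P : List (List α)} {a b c : α}
    (h : ∀ w ∈ P, w.idxOf a < w.idxOf b ∨ w.idxOf a < w.idxOf c)
    (h1 : Maj P c a) (h2 : Maj P b c) : False := by
  unfold Maj at h1 h2
  have m1 : P.countP (fun w => decide (w.idxOf c < w.idxOf a)) ≤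
      P.countP (fun w => decide (w.idxOf c < w.idxOf b)) := by
    apply List.countP_mono_left
    intro w hw
    simp only [decide_eq_true_eq]
    intro hca
    rcases h w hw with hab | hac <;> omega
  have m2 : P.countP (fun w => decide (w.idxOf b < w.idxOf c)) ≤
      P.countP (fun w => decide (w.idxOf a < w.idxOf c)) := by
    apply List.countP_mono_left
    intro w hw
    simp only [decide_eq_true_eq]
    intro hbc
    rcases h w hw with hab | hac <;> omega
  omega

private lemma kill' [DecidableEq α] {P : List (List α)} {a b c : α}
    (h : ∀ w ∈ P, w.idxOf b < w.idxOf a ∨ w.idxOf c < w.idxOf a)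
    (h1 : Maj P a b) (h2 : Maj P b c) : False := by
  unfold Maj at h1 h2
  have m1 : P.countP (fun w => decide (w.idxOf a < w.idxOf b)) ≤
      P.countP (fun w => decide (w.idxOf c < w.idxOf b)) := by
    apply List.countP_mono_left
    intro w hw
    simp only [decide_eq_true_eq]
    intro hab
    rcases h w hw with hba | hca <;> omega
  have m2 : P.countP (fun w => decide (w.idxOf b < w.idxOf c)) ≤
      P.countP (fun w => decide (w.idxOf b < w.idxOf a)) := by
    apply List.countP_mono_left
    intro w hw
    simp only [decide_eq_true_eq]
    intro hbc
    rcases h w hw with hba | hca <;> omega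
  omega

private lemma countP_restr [DecidableEq α] {P : List (List α)} (S : Finset α) {x y : α}
    (hx : x ∈ S) (hy : y ∈ S) (hxy : x ≠ y)
    (hall : ∀ w ∈ P, w.Nodup ∧ x ∈ w ∧ y ∈ w) :
    P.countP ((fun w => decide (w.idxOf x < w.idxOf y)) ∘ restr S) =
      P.countP (fun w => decide (w.idxOf x < w.idxOf y)) := by
  apply List.countP_congr
  intro w hw
  rcases hall w hw with ⟨hn, hxw, hyw⟩
  simp only [Function.comp_apply, decide_eq_true_eq]
  exact idx_lt_filter hn hxw hyw hxy _ (by simpa using hx) (by simpa using hy)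

private lemma maj_map_restr [DecidableEq α] {P : List (List α)} (S : Finset α) {x y : α}
    (hx : x ∈ S) (hy : y ∈ S) (hxy : x ≠ y)
    (hall : ∀ w ∈ P, w.Nodup ∧ x ∈ w ∧ y ∈ w) :
    Maj (P.map (restr S)) x y ↔ Maj P x y := by
  unfold Maj
  rw [List.countP_map, List.countP_map,
    countP_restr S hx hy hxy hall,
    countP_restr S hy hx hxy.symm (fun w hw => ⟨(hall w hw).1, (hall w hw).2.2, (hall w hw).2.1⟩)]

private lemma tensor_props [DecidableEq α] {A B : Finset α} (hAB : Disjoint A B)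
    {D1 D2 : Set (List α)} (h1 : IsCondorcet A D1) (h2 : IsCondorcet B D2)
    {u v : List α} (hu : u ∈ D1) (hv : v ∈ D2) {w : List α}
    (hw : w ∈ tensor A B D1 D2 u v) :
    IsLinOrd (A ∪ B) w ∧ restr A w ∈ D1 ∧ restr B w ∈ D2 ∧
      ((∀ x ∈ A, ∀ t ∈ B, w.idxOf x < w.idxOf t) ∨
        (restr A w = u ∧ restr B w = v)) := by
  rcases hw with ⟨p, hp, q, hq, rfl⟩ | ⟨hlin, hrA, hrB⟩
  · obtain ⟨hpn, hpA⟩ := h1.1 p hp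
    obtain ⟨hqn, hqB⟩ := h2.1 q hq
    have hmemp : ∀ e ∈ p, e ∈ A := fun e he => hpA ▸ List.mem_toFinset.2 he
    have hmemq : ∀ e ∈ q, e ∈ B := fun e he => hqB ▸ List.mem_toFinset.2 he
    have hdisj : ∀ e ∈ p, e ∉ q :=
      fun e he hq' => (Finset.disjoint_left.1 hAB (hmemp e he)) (hmemq e hq')
    have hrAe : restr A (p ++ q) = p := by
      unfold restr
      rw [List.filter_append]
      rw [List.filter_eq_self.2 (fun e he => by simpa using hmemp e he),
        List.filter_eq_nil_iff.2 (fun e he => by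
          simpa using fun hA' => (Finset.disjoint_left.1 hAB hA') (hmemq e he)),
        List.append_nil]
    have hrBe : restr B (p ++ q) = q := by
      unfold restr
      rw [List.filter_append]
      rw [List.filter_eq_nil_iff.2 (fun e he => by
          simpa using fun hB' => (Finset.disjoint_left.1 hAB (hmemp e he)) hB'),
        List.filter_eq_self.2 (fun e he => by simpa using hmemq e he),
        List.nil_append]
    refine ⟨⟨hpn.append hqn hdisj, by rw [List.toFinset_append, hpA, hqB]⟩,
      by rw [hrAe]; exact hp, by rw [hrBe]; exact hq, Or.inl ?_⟩
    intro x hxA t htB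
    have hxp : x ∈ p := List.mem_toFinset.1 (hpA ▸ hxA)
    have htq : t ∈ q := List.mem_toFinset.1 (hqB ▸ htB)
    have htp : t ∉ p := fun htp' => (Finset.disjoint_left.1 hAB (hmemp t htp')) htB
    rw [List.idxOf_append_of_mem hxp, List.idxOf_append_of_notMem htp]
    have := List.idxOf_lt_length_iff.2 hxp
    omega
  · exact ⟨hlin, hrA ▸ hu, hrB ▸ hv, Or.inr ⟨hrA, hrB⟩⟩

end Aux

/-- `(D1 ⊗ D2)(u,v)` is a Condorcet domain on `A ∪ B`. -/
theorem stmt_5 [DecidableEq α] (A B : Finset α) (hAB : Disjoint A B)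
    (D1 D2 : Set (List α))
    (h1 : IsCondorcet A D1) (h2 : IsCondorcet B D2)
    (u v : List α) (hu : u ∈ D1) (hv : v ∈ D2) :
    IsCondorcet (A ∪ B) (tensor A B D1 D2 u v) := by
  have props := fun (w : List α) (hw : w ∈ tensor A B D1 D2 u v) =>
    tensor_props hAB h1 h2 hu hv hw
  constructor
  · exact fun w hw => (props w hw).1
  · intro P hP hodd a ha b hb c hc hab hbc
    have pr := fun w hw => props w (hP w hw)
    have hnd : ∀ w ∈ P, w.Nodup := fun w hw => (pr w hw).1.1
    have hmem : ∀ x ∈ A ∪ B, ∀ w ∈ P, x ∈ w := by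
      intro x hx w hw
      exact List.mem_toFinset.1 (by rw [(pr w hw).1.2]; exact hx)
    have hallp : ∀ (x y : α), x ∈ A ∪ B → y ∈ A ∪ B →
        ∀ w ∈ P, w.Nodup ∧ x ∈ w ∧ y ∈ w :=
      fun x y hx hy w hw => ⟨hnd w hw, hmem x hx w hw, hmem y hy w hw⟩
    by_contra hac
    have hirr : ∀ x : α, ¬ Maj P x x := by intro x; unfold Maj; omega
    have hne_ab : a ≠ b := by rintro rfl; exact hirr _ hab
    have hne_bc : b ≠ c := by rintro rfl; exact hirr _ hbc
    have hne_ac : a ≠ c := by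
      rintro rfl
      unfold Maj at hab hbc
      omega
    have hca : Maj P c a := by
      rcases maj_total (hallp c a hc ha) hne_ac.symm hodd with h | h
      · exact h
      · exact absurd h hac
    have huln := h1.1 u hu
    have hvln := h2.1 v hv
    have hAhelp : ∀ x ∈ A, ∀ y ∈ A, ∀ t ∈ B, x ≠ y → u.idxOf x < u.idxOf y →
        ∀ w ∈ P, w.idxOf x < w.idxOf y ∨ w.idxOf x < w.idxOf t := by
      intro x hx y hy t ht hxy hult w hw
      rcases (pr w hw).2.2.2 with hcon | ⟨hrA, _⟩
      · exact Or.inr (hcon x hx t ht)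
      · left
        have hxw := hmem x (Finset.mem_union_left _ hx) w hw
        have hyw := hmem y (Finset.mem_union_left _ hy) w hw
        refine (idx_lt_filter (hnd w hw) hxw hyw hxy (fun e => decide (e ∈ A))
          (by simpa using hx) (by simpa using hy)).1 ?_
        show (restr A w).idxOf x < (restr A w).idxOf y
        rw [hrA]; exact hult
    have hBhelp : ∀ x ∈ B, ∀ y ∈ B, ∀ t ∈ A, x ≠ y → v.idxOf x < v.idxOf y →
        ∀ w ∈ P, w.idxOf t < w.idxOf y ∨ w.idxOf x < w.idxOf y := by
      intro x hx y hy t ht hxy hvlt w hw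
      rcases (pr w hw).2.2.2 with hcon | ⟨_, hrB⟩
      · exact Or.inl (hcon t ht y hy)
      · right
        have hxw := hmem x (Finset.mem_union_right _ hx) w hw
        have hyw := hmem y (Finset.mem_union_right _ hy) w hw
        refine (idx_lt_filter (hnd w hw) hxw hyw hxy (fun e => decide (e ∈ B))
          (by simpa using hx) (by simpa using hy)).1 ?_
        show (restr B w).idxOf x < (restr B w).idxOf y
        rw [hrB]; exact hvlt
    have hucmp : ∀ x ∈ A, ∀ y ∈ A, x ≠ y →
        u.idxOf x < u.idxOf y ∨ u.idxOf y < u.idxOf x := by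
      intro x hx y hy hxy
      have hxu : x ∈ u := List.mem_toFinset.1 (by rw [huln.2]; exact hx)
      have hyu : y ∈ u := List.mem_toFinset.1 (by rw [huln.2]; exact hy)
      have : u.idxOf x ≠ u.idxOf y := fun h => hxy ((List.idxOf_inj hxu).1 h)
      omega
    have hvcmp : ∀ x ∈ B, ∀ y ∈ B, x ≠ y →
        v.idxOf x < v.idxOf y ∨ v.idxOf y < v.idxOf x := by
      intro x hx y hy hxy
      have hxv : x ∈ v := List.mem_toFinset.1 (by rw [hvln.2]; exact hx)
      have hyv : y ∈ v := List.mem_toFinset.1 (by rw [hvln.2]; exact hy)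
      have : v.idxOf x ≠ v.idxOf y := fun h => hxy ((List.idxOf_inj hxv).1 h)
      omega
    rcases Finset.mem_union.1 ha with haA | haB <;>
      rcases Finset.mem_union.1 hb with hbA | hbB <;>
        rcases Finset.mem_union.1 hc with hcA | hcB
    · -- a, b, c ∈ A
      have hP' : ∀ w' ∈ P.map (restr A), w' ∈ D1 := by
        intro w' hw'
        rcases List.mem_map.1 hw' with ⟨w0, hw0, rfl⟩
        exact (pr w0 hw0).2.1
      have hodd' : Odd (P.map (restr A)).length := by simpa using hodd
      have t1 := (maj_map_restr A haA hbA hne_ab (hallp a b ha hb)).2 hab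
      have t2 := (maj_map_restr A hbA hcA hne_bc (hallp b c hb hc)).2 hbc
      have t3 := h1.2 _ hP' hodd' a haA b hbA c hcA t1 t2
      exact hac ((maj_map_restr A haA hcA hne_ac (hallp a c ha hc)).1 t3)
    · -- a, b ∈ A, c ∈ B
      rcases hucmp a haA b hbA hne_ab with hlt | hlt
      · exact kill (fun w hw => hAhelp a haA b hbA c hcB hne_ab hlt w hw) hca hbc
      · exact kill (fun w hw => (hAhelp b hbA a haA c hcB hne_ab.symm hlt w hw).symm) hab hca
    · -- a, c ∈ A, b ∈ B
      rcases hucmp a haA c hcA hne_ac with hlt | hlt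
      · exact kill (fun w hw => (hAhelp a haA c hcA b hbB hne_ac hlt w hw).symm) hca hbc
      · exact kill (fun w hw => hAhelp c hcA a haA b hbB hne_ac.symm hlt w hw) hbc hab
    · -- a ∈ A, b, c ∈ B
      rcases hvcmp b hbB c hcB hne_bc with hlt | hlt
      · exact kill' (fun w hw => hBhelp b hbB c hcB a haA hne_bc hlt w hw) hca hab
      · exact kill' (fun w hw => (hBhelp c hcB b hbB a haA hne_bc.symm hlt w hw).symm) hbc hca
    · -- b, c ∈ A, a ∈ B
      rcases hucmp b hbA c hcA hne_bc with hlt | hlt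
      · exact kill (fun w hw => hAhelp b hbA c hcA a haB hne_bc hlt w hw) hab hca
      · exact kill (fun w hw => (hAhelp c hcA b hbA a haB hne_bc.symm hlt w hw).symm) hbc hab
    · -- b ∈ A, a, c ∈ B
      rcases hvcmp a haB c hcB hne_ac with hlt | hlt
      · exact kill' (fun w hw => (hBhelp a haB c hcB b hbA hne_ac hlt w hw).symm) hca hab
      · exact kill' (fun w hw => hBhelp c hcB a haB b hbA hne_ac.symm hlt w hw) hab hbc
    · -- c ∈ A, a, b ∈ B
      rcases hvcmp a haB b hbB hne_ab with hlt | hlt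
      · exact kill' (fun w hw => hBhelp a haB b hbB c hcA hne_ab hlt w hw) hbc hca
      · exact kill' (fun w hw => (hBhelp b hbB a haB c hcA hne_ab.symm hlt w hw).symm) hab hbc
    · -- a, b, c ∈ B
      have hP' : ∀ w' ∈ P.map (restr B), w' ∈ D2 := by
        intro w' hw'
        rcases List.mem_map.1 hw' with ⟨w0, hw0, rfl⟩
        exact (pr w0 hw0).2.2.1
      have hodd' : Odd (P.map (restr B)).length := by simpa using hodd
      have t1 := (maj_map_restr B haB hbB hne_ab (hallp a b ha hb)).2 hab
      have t2 := (maj_map_restr B hbB hcB hne_bc (hallp b c hb hc)).2 hbc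
      have t3 := h2.2 _ hP' hodd' a haB b hbB c hcB t1 t2
      exact hac ((maj_map_restr B haB hcB hne_ac (hallp a c ha hc)).1 t3)
end

section
/- Let D1, D2 be peak-pit Condorcet domains on disjoint finite sets A and B, and u ∈ D1, v ∈ D2. Then (D1 ⊗ D2)(u,v) = (D1 ⊙ D2) ∪ (u ⊕ v) is a peak-pit domain: for every 3-element subset of A ∪ B it satisfies a never-top or never-bottom condition. -/
/-! Linear orders on a finite set `A` are encoded as duplicate-free lists
(top alternative first) whose set of entries is `A`. -/

variable {α β : Type*}

section Aux
variable {α : Type*} [DecidableEq α]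


lemma restr_append (S : Finset α) (x y : List α) :
    restr S (x ++ y) = restr S x ++ restr S y := List.filter_append _ _

lemma restr_eq_nil {S : Finset α} {w : List α} (h : ∀ x ∈ w, x ∉ S) :
    restr S w = [] := by
  simp only [restr, List.filter_eq_nil_iff, decide_eq_true_eq]
  exact h

lemma restr_restr {S T : Finset α} (h : S ⊆ T) (w : List α) :
    restr S (restr T w) = restr S w := by
  unfold restr
  rw [List.filter_filter]
  apply List.filter_congr
  intro x _
  by_cases hxS : x ∈ S
  · simp [hxS, h hxS]
  · simp [hxS]

lemma toFinset_restr (S : Finset α) (w : List α) :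
    (restr S w).toFinset = w.toFinset ∩ S := by
  ext z
  simp [restr, List.mem_toFinset, List.mem_filter, Finset.mem_inter]

lemma restr_length {S : Finset α} {w : List α} (hw : w.Nodup) :
    (restr S w).length = (w.toFinset ∩ S).card := by
  rw [← toFinset_restr]
  exact (List.toFinset_card_of_nodup (hw.filter _)).symm

lemma restr_singleton {S : Finset α} {w : List α} {c : α} (hw : w.Nodup)
    (hc : c ∈ w) (hcS : c ∈ S) (h : ∀ x ∈ w, x ∈ S → x = c) :
    restr S w = [c] := by
  have hlen : (restr S w).length = 1 := by
    rw [restr_length hw]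
    have : w.toFinset ∩ S = {c} := by
      ext z
      simp only [Finset.mem_inter, List.mem_toFinset, Finset.mem_singleton]
      constructor
      · rintro ⟨h1, h2⟩; exact h z h1 h2
      · rintro rfl; exact ⟨hc, hcS⟩
    rw [this, Finset.card_singleton]
  obtain ⟨z, hz⟩ := List.length_eq_one_iff.mp hlen
  have hzmem : z ∈ restr S w := by rw [hz]; exact List.mem_singleton_self z
  have : z ∈ w ∧ z ∈ S := by
    simpa [restr, List.mem_filter] using hzmem
  rw [hz, h z this.1 this.2]

lemma restr_pair {u : List α} {a b : α} (hn : u.Nodup) (ha : a ∈ u) (hb : b ∈ u)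
    (hab : a ≠ b) :
    restr {a, b} u = [a, b] ∨ restr {a, b} u = [b, a] := by
  have hlen : (restr {a, b} u).length = 2 := by
    rw [restr_length hn]
    have : u.toFinset ∩ {a, b} = {a, b} := by
      apply Finset.inter_eq_right.mpr
      intro z hz
      simp only [Finset.mem_insert, Finset.mem_singleton] at hz
      rcases hz with rfl | rfl <;> simp [ha, hb]
    rw [this, Finset.card_insert_of_notMem (by simpa using hab), Finset.card_singleton]
  obtain ⟨x, y, hxy⟩ := List.length_eq_two.mp hlen
  have hnd : (restr {a, b} u).Nodup := hn.filter _
  have hxyne : x ≠ y := by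
    rw [hxy] at hnd; simpa using hnd
  have hxm : x ∈ ({a, b} : Finset α) := by
    have : x ∈ restr {a, b} u := by rw [hxy]; simp
    exact (List.mem_filter.mp this).2 |> (by simpa using ·)
  have hym : y ∈ ({a, b} : Finset α) := by
    have : y ∈ restr {a, b} u := by rw [hxy]; simp
    exact (List.mem_filter.mp this).2 |> (by simpa using ·)
  simp only [Finset.mem_insert, Finset.mem_singleton] at hxm hym
  rcases hxm with rfl | rfl <;> rcases hym with rfl | rfl
  · exact absurd rfl hxyne
  · left; rw [hxy]
  · right; rw [hxy]
  · exact absurd rfl hxyne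


lemma never_congr {D : Set (List α)} {a b c a' b' c' x : α} {i : ℕ}
    (h : ({a, b, c} : Finset α) = {a', b', c'}) :
    Never D a' b' c' x i → Never D a b c x i := by
  intro hn w hw
  show (restr {a, b, c} w)[i - 1]? ≠ some x
  rw [h]
  exact hn w hw

/-- In a tensor element, the restriction to a subset of `A` agrees with the
restriction of some member of `D1`. -/
lemma restr_tensor_left {A B : Finset α} (hAB : Disjoint A B)
    {D1 D2 : Set (List α)} (h1 : ∀ w ∈ D1, IsLinOrd A w)
    (h2 : ∀ w ∈ D2, IsLinOrd B w) {u v : List α} (hu : u ∈ D1)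
    {S : Finset α} (hS : ↑S ⊆ (A : Set α)) {w : List α}
    (hw : w ∈ tensor A B D1 D2 u v) : ∃ p ∈ D1, restr S w = restr S p := by
  rcases hw with ⟨p, hp, q, hq, rfl⟩ | ⟨_, hA, _⟩
  · refine ⟨p, hp, ?_⟩
    rw [restr_append]
    have : restr S q = [] := by
      apply restr_eq_nil
      intro z hz hzS
      have hzB : z ∈ B := by
        rw [← (h2 q hq).2]; exact List.mem_toFinset.mpr hz
      exact (Finset.disjoint_left.mp hAB (hS hzS)) hzB
    rw [this, List.append_nil]
  · refine ⟨u, hu, ?_⟩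
    have hSA : S ⊆ A := fun z hz => hS hz
    rw [← restr_restr hSA w, hA]

lemma restr_tensor_right {A B : Finset α} (hAB : Disjoint A B)
    {D1 D2 : Set (List α)} (h1 : ∀ w ∈ D1, IsLinOrd A w)
    (h2 : ∀ w ∈ D2, IsLinOrd B w) {u v : List α} (hv : v ∈ D2)
    {S : Finset α} (hS : ↑S ⊆ (B : Set α)) {w : List α}
    (hw : w ∈ tensor A B D1 D2 u v) : ∃ p ∈ D2, restr S w = restr S p := by
  rcases hw with ⟨p, hp, q, hq, rfl⟩ | ⟨_, _, hB⟩
  · refine ⟨q, hq, ?_⟩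
    rw [restr_append]
    have : restr S p = [] := by
      apply restr_eq_nil
      intro z hz hzS
      have hzA : z ∈ A := by
        rw [← (h1 p hp).2]; exact List.mem_toFinset.mpr hz
      exact (Finset.disjoint_left.mp hAB hzA) (hS hzS)
    rw [this, List.nil_append]
  · refine ⟨v, hv, ?_⟩
    have hSB : S ⊆ B := fun z hz => hS hz
    rw [← restr_restr hSB w, hB]

/-- Two elements of `A`, one of `B`: the `u`-higher of the pair is
never-bottom in the tensor product. -/
lemma core2 {A B : Finset α} (hAB : Disjoint A B)
    {D1 D2 : Set (List α)} (h1 : ∀ w ∈ D1, IsLinOrd A w)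
    (h2 : ∀ w ∈ D2, IsLinOrd B w) {u v : List α} (hu : u ∈ D1)
    {a b c : α} (ha : a ∈ A) (hb : b ∈ A) (hc : c ∈ B) (hab : a ≠ b)
    (hru : restr {a, b} u = [a, b]) :
    Never (tensor A B D1 D2 u v) a b c a 3 := by
  have hcA : c ∉ A := Finset.disjoint_right.mp hAB hc
  have hac : a ≠ c := fun h => hcA (h ▸ ha)
  intro w hw
  rcases hw with ⟨p, hp, q, hq, rfl⟩ | ⟨⟨hnd, htf⟩, hA, _⟩
  · -- concatenation case : c is always bottom
    obtain ⟨hpn, hpt⟩ := h1 p hp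
    obtain ⟨hqn, hqt⟩ := h2 q hq
    have hrq : restr {a, b, c} q = [c] := by
      apply restr_singleton hqn
      · rw [← List.mem_toFinset, hqt]; exact hc
      · simp
      · intro z hz hzS
        have hzB : z ∈ B := by rw [← hqt]; exact List.mem_toFinset.mpr hz
        simp only [Finset.mem_insert, Finset.mem_singleton] at hzS
        rcases hzS with rfl | rfl | rfl
        · exact absurd hzB (Finset.disjoint_left.mp hAB ha)
        · exact absurd hzB (Finset.disjoint_left.mp hAB hb)
        · rfl
    have hlp : (restr {a, b, c} p).length = 2 := by
      rw [restr_length hpn, hpt]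
      have : A ∩ {a, b, c} = {a, b} := by
        ext z
        simp only [Finset.mem_inter, Finset.mem_insert, Finset.mem_singleton]
        constructor
        · rintro ⟨hzA, rfl | rfl | rfl⟩
          · exact Or.inl rfl
          · exact Or.inr rfl
          · exact absurd hzA hcA
        · rintro (rfl | rfl)
          · exact ⟨ha, Or.inl rfl⟩
          · exact ⟨hb, Or.inr (Or.inl rfl)⟩
      rw [this, Finset.card_insert_of_notMem (by simpa using hab),
        Finset.card_singleton]
    rw [restr_append, hrq, List.getElem?_append_right (by omega), hlp]
    simp [hac.symm]
  · -- shuffle case : b sits below a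
    set r := restr {a, b, c} w with hr
    have hsub : ({a, b} : Finset α) ⊆ {a, b, c} := by
      intro z hz
      simp only [Finset.mem_insert, Finset.mem_singleton] at hz ⊢
      tauto
    have hsubA : ({a, b} : Finset α) ⊆ A := by
      intro z hz
      simp only [Finset.mem_insert, Finset.mem_singleton] at hz
      rcases hz with rfl | rfl
      · exact ha
      · exact hb
    have hrab : restr {a, b} r = [a, b] := by
      rw [hr, restr_restr hsub, ← restr_restr hsubA w, hA, hru]
    intro heq
    have h2lt : 2 < r.length := (List.getElem?_eq_some_iff.mp heq).1
    have hle : r.length ≤ 3 := by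
      rw [restr_length hnd]
      have h3 : ({a, b, c} : Finset α).card ≤ 3 := by
        have t1 := Finset.card_insert_le a ({b, c} : Finset α)
        have t2 := Finset.card_insert_le b ({c} : Finset α)
        simp only [Finset.card_singleton] at t2
        omega
      exact le_trans (Finset.card_le_card Finset.inter_subset_right) h3
    have hlen3 : r.length = 3 := by omega
    obtain ⟨x0, x1, x2, hxyz⟩ := List.length_eq_three.mp hlen3
    have hx2 : x2 = a := by
      rw [hxyz] at heq
      simpa using heq
    rw [hxyz, hx2] at hrab
    have hsplit : restr {a, b} [x0, x1, a] = restr {a, b} [x0, x1] ++ [a] := by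
      show restr {a, b} ([x0, x1] ++ [a]) = _
      rw [restr_append]
      congr 1
      simp [restr]
    have hkey : restr {a, b} [x0, x1] ++ [a] = [a] ++ [b] := by
      rw [← hsplit, hrab]; rfl
    have := (List.append_inj' hkey rfl).2
    simp at this
    exact hab this

/-- One element of `A`, two of `B`: the `v`-lower of the pair is
never-top in the tensor product. -/
lemma core3 {A B : Finset α} (hAB : Disjoint A B)
    {D1 D2 : Set (List α)} (h1 : ∀ w ∈ D1, IsLinOrd A w)
    (h2 : ∀ w ∈ D2, IsLinOrd B w) {u v : List α} (hv : v ∈ D2)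
    {a b c : α} (ha : a ∈ A) (hb : b ∈ B) (hc : c ∈ B) (hbc : b ≠ c)
    (hrv : restr {b, c} v = [b, c]) :
    Never (tensor A B D1 D2 u v) a b c c 1 := by
  have hcA : c ∉ A := Finset.disjoint_right.mp hAB hc
  have hac : a ≠ c := fun h => hcA (h ▸ ha)
  intro w hw
  rcases hw with ⟨p, hp, q, hq, rfl⟩ | ⟨⟨hnd, htf⟩, _, hB⟩
  · -- concatenation case : a is always top
    obtain ⟨hpn, hpt⟩ := h1 p hp
    have hrp : restr {a, b, c} p = [a] := by
      apply restr_singleton hpn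
      · rw [← List.mem_toFinset, hpt]; exact ha
      · simp
      · intro z hz hzS
        have hzA : z ∈ A := by rw [← hpt]; exact List.mem_toFinset.mpr hz
        simp only [Finset.mem_insert, Finset.mem_singleton] at hzS
        rcases hzS with rfl | rfl | rfl
        · rfl
        · exact absurd hzA (Finset.disjoint_right.mp hAB hb)
        · exact absurd hzA hcA
    rw [restr_append, hrp]
    simp [hac]
  · -- shuffle case : c sits below b
    set r := restr {a, b, c} w with hr
    have hsub : ({b, c} : Finset α) ⊆ {a, b, c} := by
      intro z hz
      simp only [Finset.mem_insert, Finset.mem_singleton] at hz ⊢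
      tauto
    have hsubB : ({b, c} : Finset α) ⊆ B := by
      intro z hz
      simp only [Finset.mem_insert, Finset.mem_singleton] at hz
      rcases hz with rfl | rfl
      · exact hb
      · exact hc
    have hrbc : restr {b, c} r = [b, c] := by
      rw [hr, restr_restr hsub, ← restr_restr hsubB w, hB, hrv]
    intro heq
    match hrm : r, heq with
    | x0 :: t, heq =>
      have hx0 : x0 = c := by simpa using heq
      rw [hx0] at hrbc
      have : restr {b, c} (c :: t) = c :: restr {b, c} t := by
        simp [restr]
      rw [this] at hrbc
      exact hbc (List.head_eq_of_cons_eq hrbc).symm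

lemma sameA {A B : Finset α} (hAB : Disjoint A B)
    {D1 D2 : Set (List α)} (h1 : ∀ w ∈ D1, IsLinOrd A w)
    (h2 : ∀ w ∈ D2, IsLinOrd B w) {u v : List α} (hu : u ∈ D1)
    (hp1 : PeakPit A D1) {a b c : α} (ha : a ∈ A) (hb : b ∈ A) (hc : c ∈ A)
    (hab : a ≠ b) (hac : a ≠ c) (hbc : b ≠ c) :
    ∃ x ∈ ({a, b, c} : Finset α), Never (tensor A B D1 D2 u v) a b c x 1 ∨
      Never (tensor A B D1 D2 u v) a b c x 3 := by
  obtain ⟨x, hx, hn⟩ := hp1 a ha b hb c hc hab hac hbc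
  have hS : ↑({a, b, c} : Finset α) ⊆ (A : Set α) := by
    intro z hz
    simp only [Finset.coe_insert, Finset.coe_singleton, Set.mem_insert_iff,
      Set.mem_singleton_iff] at hz
    rcases hz with rfl | rfl | rfl <;> simpa using (by assumption : z ∈ A) <;> skip
  refine ⟨x, hx, ?_⟩
  refine hn.imp (fun hn1 w hw => ?_) (fun hn3 w hw => ?_) <;>
  · obtain ⟨p, hp, he⟩ := restr_tensor_left hAB h1 h2 hu hS hw
    show (restr {a, b, c} w)[_]? ≠ some x
    rw [he]
    first
      | exact hn1 p hp
      | exact hn3 p hp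

lemma sameB {A B : Finset α} (hAB : Disjoint A B)
    {D1 D2 : Set (List α)} (h1 : ∀ w ∈ D1, IsLinOrd A w)
    (h2 : ∀ w ∈ D2, IsLinOrd B w) {u v : List α} (hv : v ∈ D2)
    (hp2 : PeakPit B D2) {a b c : α} (ha : a ∈ B) (hb : b ∈ B) (hc : c ∈ B)
    (hab : a ≠ b) (hac : a ≠ c) (hbc : b ≠ c) :
    ∃ x ∈ ({a, b, c} : Finset α), Never (tensor A B D1 D2 u v) a b c x 1 ∨
      Never (tensor A B D1 D2 u v) a b c x 3 := by
  obtain ⟨x, hx, hn⟩ := hp2 a ha b hb c hc hab hac hbc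
  have hS : ↑({a, b, c} : Finset α) ⊆ (B : Set α) := by
    intro z hz
    simp only [Finset.coe_insert, Finset.coe_singleton, Set.mem_insert_iff,
      Set.mem_singleton_iff] at hz
    rcases hz with rfl | rfl | rfl <;> simpa using (by assumption : z ∈ B) <;> skip
  refine ⟨x, hx, ?_⟩
  refine hn.imp (fun hn1 w hw => ?_) (fun hn3 w hw => ?_) <;>
  · obtain ⟨p, hp, he⟩ := restr_tensor_right hAB h1 h2 hv hS hw
    show (restr {a, b, c} w)[_]? ≠ some x
    rw [he]
    first
      | exact hn1 p hp
      | exact hn3 p hp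

lemma twoA {A B : Finset α} (hAB : Disjoint A B)
    {D1 D2 : Set (List α)} (h1 : ∀ w ∈ D1, IsLinOrd A w)
    (h2 : ∀ w ∈ D2, IsLinOrd B w) {u v : List α} (hu : u ∈ D1)
    {a b c : α} (ha : a ∈ A) (hb : b ∈ A) (hc : c ∈ B) (hab : a ≠ b) :
    ∃ x ∈ ({a, b, c} : Finset α), Never (tensor A B D1 D2 u v) a b c x 1 ∨
      Never (tensor A B D1 D2 u v) a b c x 3 := by
  obtain ⟨hun, hut⟩ := h1 u hu
  have hau : a ∈ u := by rw [← List.mem_toFinset, hut]; exact ha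
  have hbu : b ∈ u := by rw [← List.mem_toFinset, hut]; exact hb
  rcases restr_pair hun hau hbu hab with h | h
  · exact ⟨a, by simp, Or.inr (core2 hAB h1 h2 hu ha hb hc hab h)⟩
  · have h' : restr {b, a} u = [b, a] := by rw [Finset.pair_comm b a]; exact h
    have hn : Never (tensor A B D1 D2 u v) b a c b 3 :=
      core2 hAB h1 h2 hu hb ha hc hab.symm h'
    have heq : ({a, b, c} : Finset α) = {b, a, c} := by
      ext z; simp only [Finset.mem_insert, Finset.mem_singleton]; tauto
    exact ⟨b, by simp, Or.inr (never_congr heq hn)⟩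

lemma twoB {A B : Finset α} (hAB : Disjoint A B)
    {D1 D2 : Set (List α)} (h1 : ∀ w ∈ D1, IsLinOrd A w)
    (h2 : ∀ w ∈ D2, IsLinOrd B w) {u v : List α} (hv : v ∈ D2)
    {a b c : α} (ha : a ∈ A) (hb : b ∈ B) (hc : c ∈ B) (hbc : b ≠ c) :
    ∃ x ∈ ({a, b, c} : Finset α), Never (tensor A B D1 D2 u v) a b c x 1 ∨
      Never (tensor A B D1 D2 u v) a b c x 3 := by
  obtain ⟨hvn, hvt⟩ := h2 v hv
  have hbv : b ∈ v := by rw [← List.mem_toFinset, hvt]; exact hb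
  have hcv : c ∈ v := by rw [← List.mem_toFinset, hvt]; exact hc
  rcases restr_pair hvn hbv hcv hbc with h | h
  · exact ⟨c, by simp, Or.inl (core3 hAB h1 h2 hv ha hb hc hbc h)⟩
  · have h' : restr {c, b} v = [c, b] := by rw [Finset.pair_comm c b]; exact h
    have hn : Never (tensor A B D1 D2 u v) a c b b 1 :=
      core3 hAB h1 h2 hv ha hc hb hbc.symm h'
    have heq : ({a, b, c} : Finset α) = {a, c, b} := by
      ext z; simp only [Finset.mem_insert, Finset.mem_singleton]; tauto
    exact ⟨b, by simp, Or.inl (never_congr heq hn)⟩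

lemma perm_ex {D : Set (List α)} {a b c a' b' c' : α}
    (h : ({a, b, c} : Finset α) = {a', b', c'})
    (H : ∃ x ∈ ({a', b', c'} : Finset α), Never D a' b' c' x 1 ∨
      Never D a' b' c' x 3) :
    ∃ x ∈ ({a, b, c} : Finset α), Never D a b c x 1 ∨ Never D a b c x 3 := by
  obtain ⟨x, hx, hn⟩ := H
  exact ⟨x, by rw [h]; exact hx, hn.imp (never_congr h) (never_congr h)⟩

end Aux

/-- if `D1`, `D2` are peak-pit Condorcet domains then
`(D1 ⊗ D2)(u,v)` is a peak-pit domain. -/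
theorem stmt_6 [DecidableEq α] (A B : Finset α) (hAB : Disjoint A B)
    (D1 D2 : Set (List α))
    (h1 : IsCondorcet A D1) (h2 : IsCondorcet B D2)
    (hp1 : PeakPit A D1) (hp2 : PeakPit B D2)
    (u v : List α) (hu : u ∈ D1) (hv : v ∈ D2) :
    PeakPit (A ∪ B) (tensor A B D1 D2 u v) := by
  intro a ha b hb c hc hab hac hbc
  have h1' := h1.1
  have h2' := h2.1
  have eACB : ({a, b, c} : Finset α) = {a, c, b} := by
    ext z; simp only [Finset.mem_insert, Finset.mem_singleton]; tauto
  have eBCA : ({a, b, c} : Finset α) = {b, c, a} := by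
    ext z; simp only [Finset.mem_insert, Finset.mem_singleton]; tauto
  have eBAC : ({a, b, c} : Finset α) = {b, a, c} := by
    ext z; simp only [Finset.mem_insert, Finset.mem_singleton]; tauto
  have eCAB : ({a, b, c} : Finset α) = {c, a, b} := by
    ext z; simp only [Finset.mem_insert, Finset.mem_singleton]; tauto
  rcases Finset.mem_union.mp ha with haA | haB <;>
    rcases Finset.mem_union.mp hb with hbA | hbB <;>
      rcases Finset.mem_union.mp hc with hcA | hcB
  · exact sameA hAB h1' h2' hu hp1 haA hbA hcA hab hac hbc
  · exact twoA hAB h1' h2' hu haA hbA hcB hab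
  · exact perm_ex eACB (twoA hAB h1' h2' hu haA hcA hbB hac)
  · exact twoB hAB h1' h2' hv haA hbB hcB hbc
  · exact perm_ex eBCA (twoA hAB h1' h2' hu hbA hcA haB hbc)
  · exact perm_ex eBAC (twoB hAB h1' h2' hv hbA haB hcB hac)
  · exact perm_ex eCAB (twoB hAB h1' h2' hv hcA haB hbB hab)
  · exact sameB hAB h1' h2' hv hp2 haB hbB hcB hab hac hbc
end

section
/- Let D1, D2 be Condorcet domains on disjoint finite sets A, B with |A| = m, |B| = n, and let u ∈ D1, v ∈ D2. Then |(D1 ⊗ D2)(u,v)| = |D1|·|D2| + C(n+m, m) − 1. -/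
/-! Linear orders on a finite set `A` are encoded as duplicate-free lists
(top alternative first) whose set of entries is `A`. -/

variable {α β : Type*}

section StmtSevenAux
variable {α : Type*}

/-- All shuffles of two lists, as a list of lists. -/
def shuffleL : List α → List α → List (List α)
  | [], v => [v]
  | a :: u, [] => [a :: u]
  | a :: u, b :: v =>
      ((shuffleL u (b :: v)).map (a :: ·)) ++ ((shuffleL (a :: u) v).map (b :: ·))

theorem shuffleL_length (u v : List α) :
    (shuffleL u v).length = (u.length + v.length).choose u.length := by
  induction u, v using shuffleL.induct with
  | case1 v => simp [shuffleL]
  | case2 a u => simp [shuffleL, Nat.choose_self]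
  | case3 a u b v ih1 ih2 =>
      simp only [shuffleL, List.length_append, List.length_map, ih1, ih2, List.length_cons]
      have h : u.length + 1 + (v.length + 1) = (u.length + (v.length + 1)) + 1 := by omega
      have h2 : u.length + 1 + v.length = u.length + (v.length + 1) := by omega
      rw [h, h2, Nat.choose_succ_succ]

theorem shuffleL_perm : ∀ (u v w : List α), w ∈ shuffleL u v → w.Perm (u ++ v) := by
  intro u v
  induction u, v using shuffleL.induct with
  | case1 v => intro w hw; simp [shuffleL] at hw; simp [hw]
  | case2 a u => intro w hw; simp [shuffleL] at hw; simp [hw]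
  | case3 a u b v ih1 ih2 =>
      intro w hw
      simp only [shuffleL, List.mem_append, List.mem_map] at hw
      rcases hw with ⟨t, ht, rfl⟩ | ⟨t, ht, rfl⟩
      · exact ((ih1 t ht).cons a)
      · exact ((ih2 t ht).cons b).trans (List.perm_middle).symm

theorem shuffleL_nodup {p : α → Bool} :
    ∀ (u v : List α), (∀ x ∈ u, p x = true) → (∀ x ∈ v, p x = false) →
      (shuffleL u v).Nodup := by
  intro u
  induction u with
  | nil => intro v _ _; simp [shuffleL]
  | cons a u ihu =>
      intro v
      induction v with
      | nil => intro _ _; simp [shuffleL]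
      | cons b v ihv =>
          intro hu hv
          have pa := hu a List.mem_cons_self
          have pb := hv b List.mem_cons_self
          have hab : a ≠ b := by intro h; rw [h, pb] at pa; exact Bool.noConfusion pa
          simp only [shuffleL]
          refine List.Nodup.append ?_ ?_ ?_
          · exact (ihu (b :: v) (fun x hx => hu x (List.mem_cons_of_mem _ hx)) hv).map
              (fun x y h => by injection h)
          · exact (ihv hu (fun x hx => hv x (List.mem_cons_of_mem _ hx))).map
              (fun x y h => by injection h)
          · intro w hw1 hw2
            simp only [List.mem_map] at hw1 hw2
            obtain ⟨t, _, rfl⟩ := hw1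
            obtain ⟨t', _, heq⟩ := hw2
            exact hab (by injection heq.symm)

theorem mem_shuffleL {p : α → Bool} (w u v : List α)
    (hu : ∀ x ∈ u, p x = true) (hv : ∀ x ∈ v, p x = false) :
    w ∈ shuffleL u v ↔ w.filter p = u ∧ w.filter (fun x => !p x) = v := by
  induction w generalizing u v with
  | nil =>
      match u, v with
      | [], [] => simp [shuffleL]
      | [], b :: v => simp [shuffleL]
      | a :: u, [] => simp [shuffleL]
      | a :: u, b :: v => simp [shuffleL]
  | cons c w ih =>
      match u, v with
      | [], v =>
          simp only [shuffleL, List.mem_singleton]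
          constructor
          · rintro rfl
            refine ⟨List.filter_eq_nil_iff.2 (fun x hx => by simp [hv x hx]), ?_⟩
            exact List.filter_eq_self.2 (fun x hx => by simp [hv x hx])
          · rintro ⟨h1, h2⟩
            rw [← h2]
            exact (List.filter_eq_self.2 (fun x hx => by
              simp [List.filter_eq_nil_iff.1 h1 x hx])).symm
      | a :: u, [] =>
          simp only [shuffleL, List.mem_singleton]
          constructor
          · intro heq
            obtain ⟨rfl, rfl⟩ : a = c ∧ u = w := by constructor <;> injection heq.symm
            refine ⟨List.filter_eq_self.2 (fun x hx => by simp [hu x hx]), ?_⟩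
            exact List.filter_eq_nil_iff.2 (fun x hx => by simp [hu x hx])
          · rintro ⟨h1, h2⟩
            rw [← h1]
            refine (List.filter_eq_self.2 (fun x hx => ?_)).symm
            have := List.filter_eq_nil_iff.1 h2 x hx
            simpa using this
      | a :: u, b :: v =>
          have pa := hu a List.mem_cons_self
          have pb := hv b List.mem_cons_self
          simp only [shuffleL, List.mem_append, List.mem_map]
          constructor
          · rintro (⟨t, ht, heq⟩ | ⟨t, ht, heq⟩)
            · obtain ⟨rfl, rfl⟩ : c = a ∧ w = t := by
                constructor <;> injection heq.symm
              obtain ⟨hf1, hf2⟩ :=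
                (ih u (b :: v) (fun x hx => hu x (List.mem_cons_of_mem _ hx)) hv).1 ht
              exact ⟨by simp [List.filter_cons, pa, hf1], by simp [List.filter_cons, pa, hf2]⟩
            · obtain ⟨rfl, rfl⟩ : c = b ∧ w = t := by
                constructor <;> injection heq.symm
              obtain ⟨hf1, hf2⟩ :=
                (ih (a :: u) v hu (fun x hx => hv x (List.mem_cons_of_mem _ hx))).1 ht
              exact ⟨by simp [List.filter_cons, pb, hf1], by simp [List.filter_cons, pb, hf2]⟩
          · rintro ⟨hf1, hf2⟩
            cases hpc : p c
            · right
              rw [List.filter_cons_of_neg (by simp [hpc])] at hf1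
              rw [List.filter_cons_of_pos (by simp [hpc])] at hf2
              obtain ⟨rfl, hw⟩ : c = b ∧ w.filter (fun x => !p x) = v := by
                constructor <;> injection hf2
              exact ⟨w, (ih (a :: u) v hu
                (fun x hx => hv x (List.mem_cons_of_mem _ hx))).2 ⟨hf1, hw⟩, rfl⟩
            · left
              rw [List.filter_cons_of_pos (by simp [hpc])] at hf1
              rw [List.filter_cons_of_neg (by simp [hpc])] at hf2
              obtain ⟨rfl, hw⟩ : c = a ∧ w.filter p = u := by
                constructor <;> injection hf1
              exact ⟨w, (ih u (b :: v)
                (fun x hx => hu x (List.mem_cons_of_mem _ hx)) hv).2 ⟨hw, hf2⟩, rfl⟩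

theorem restr_append_left' [DecidableEq α] (S : Finset α) (x y : List α)
    (hx : ∀ a ∈ x, a ∈ S) (hy : ∀ a ∈ y, a ∉ S) : restr S (x ++ y) = x := by
  rw [restr, List.filter_append]
  rw [List.filter_eq_self.2 (fun a ha => by simp [hx a ha]),
    List.filter_eq_nil_iff.2 (fun a ha => by simp [hy a ha]), List.append_nil]

theorem restr_append_right' [DecidableEq α] (S : Finset α) (x y : List α)
    (hx : ∀ a ∈ x, a ∉ S) (hy : ∀ a ∈ y, a ∈ S) : restr S (x ++ y) = y := by
  rw [restr, List.filter_append]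
  rw [List.filter_eq_nil_iff.2 (fun a ha => by simp [hx a ha]),
    List.filter_eq_self.2 (fun a ha => by simp [hy a ha]), List.nil_append]

theorem linOrd_finite [DecidableEq α] (A : Finset α) :
    {w : List α | IsLinOrd A w}.Finite := by
  apply Set.Finite.subset (A.toList.permutations.toFinset.finite_toSet)
  intro w hw
  simp only [Finset.coe_sort_coe, List.coe_toFinset, Set.mem_setOf_eq,
    List.mem_permutations]
  exact List.perm_of_nodup_nodup_toFinset_eq hw.1 A.nodup_toList
    (hw.2.trans A.toList_toFinset.symm)

end StmtSevenAux

/-- `|(D1 ⊗ D2)(u,v)| = |D1|⬝|D2| + C(n+m, m) − 1`. -/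
theorem stmt_7 [DecidableEq α] (A B : Finset α) (hAB : Disjoint A B)
    (m n : ℕ) (hm : A.card = m) (hn : B.card = n)
    (D1 D2 : Set (List α))
    (h1 : IsCondorcet A D1) (h2 : IsCondorcet B D2)
    (u v : List α) (hu : u ∈ D1) (hv : v ∈ D2) :
    (tensor A B D1 D2 u v).ncard =
      D1.ncard * D2.ncard + (n + m).choose m - 1 := by
  classical
  obtain ⟨hun, huf⟩ := h1.1 u hu
  obtain ⟨hvn, hvf⟩ := h2.1 v hv
  have huA : ∀ x ∈ u, x ∈ A := fun x hx => huf ▸ List.mem_toFinset.2 hx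
  have hvB : ∀ x ∈ v, x ∈ B := fun x hx => hvf ▸ List.mem_toFinset.2 hx
  have hvA : ∀ x ∈ v, x ∉ A := fun x hx hxA => Finset.disjoint_left.1 hAB hxA (hvB x hx)
  have huB : ∀ x ∈ u, x ∉ B := fun x hx => Finset.disjoint_left.1 hAB (huA x hx)
  set p : α → Bool := fun x => decide (x ∈ A) with hp
  have hus : ∀ x ∈ u, p x = true := fun x hx => decide_eq_true (huA x hx)
  have hvs : ∀ x ∈ v, p x = false := fun x hx => decide_eq_false (hvA x hx)
  have hul : u.length = m := by rw [← hm, ← huf, List.toFinset_card_of_nodup hun]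
  have hvl : v.length = n := by rw [← hn, ← hvf, List.toFinset_card_of_nodup hvn]
  -- the set of shuffles is the coercion of the explicit list of shuffles
  have hS : shuffles A B u v = {w | w ∈ shuffleL u v} := by
    ext w
    simp only [shuffles, Set.mem_setOf_eq]
    constructor
    · rintro ⟨⟨hwn, hwf⟩, hra, hrb⟩
      rw [mem_shuffleL w u v hus hvs]
      refine ⟨hra, ?_⟩
      rw [← hrb, restr]
      apply List.filter_congr
      intro x hx
      have hxAB : x ∈ A ∨ x ∈ B := by
        have : x ∈ A ∪ B := by rw [← hwf]; exact List.mem_toFinset.2 hx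
        simpa [Finset.mem_union] using this
      by_cases hxA : x ∈ A
      · simp [p, hxA, Finset.disjoint_left.1 hAB hxA]
      · simp [p, hxA, hxAB.resolve_left hxA]
    · intro hw
      have hperm := shuffleL_perm u v w hw
      obtain ⟨hf1, hf2⟩ := (mem_shuffleL w u v hus hvs).1 hw
      have hdisj : u.Disjoint v := fun {a} ha hav => huB a ha (hvB a hav)
      have hwn : w.Nodup := hperm.nodup_iff.2 (List.nodup_append.2 ⟨hun, hvn, fun a ha b hb hab => by subst hab; exact huB a ha (hvB a hb)⟩)
      have hwf : w.toFinset = A ∪ B := by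
        rw [List.toFinset_eq_of_perm _ _ hperm, List.toFinset_append, huf, hvf]
      refine ⟨⟨hwn, hwf⟩, hf1, ?_⟩
      rw [restr, ← hf2]
      apply List.filter_congr
      intro x hx
      have hxAB : x ∈ A ∨ x ∈ B := by
        have : x ∈ A ∪ B := by rw [← hwf]; exact List.mem_toFinset.2 hx
        simpa [Finset.mem_union] using this
      by_cases hxA : x ∈ A
      · simp [p, hxA, Finset.disjoint_left.1 hAB hxA]
      · simp [p, hxA, hxAB.resolve_left hxA]
  have hSfin : (shuffles A B u v).Finite := by
    rw [hS, ← List.coe_toFinset]; exact (shuffleL u v).toFinset.finite_toSet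
  have hScard : (shuffles A B u v).ncard = (n + m).choose m := by
    rw [hS, ← List.coe_toFinset, Set.ncard_coe_finset,
      List.toFinset_card_of_nodup (shuffleL_nodup u v hus hvs), shuffleL_length, hul, hvl,
      Nat.add_comm m n]
  -- concatenation is an injective image of the product
  have hCeq : concatDom D1 D2 = (fun q : List α × List α => q.1 ++ q.2) '' (D1 ×ˢ D2) := by
    ext w
    constructor
    · rintro ⟨x, hx, y, hy, rfl⟩; exact ⟨(x, y), ⟨hx, hy⟩, rfl⟩
    · rintro ⟨⟨x, y⟩, ⟨hx, hy⟩, rfl⟩; exact ⟨x, hx, y, hy, rfl⟩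
  have hlen1 : ∀ x ∈ D1, x.length = m := fun x hx => by
    rw [← hm, ← (h1.1 x hx).2, List.toFinset_card_of_nodup (h1.1 x hx).1]
  have hinj : Set.InjOn (fun q : List α × List α => q.1 ++ q.2) (D1 ×ˢ D2) := by
    rintro ⟨x1, y1⟩ ⟨hx1, hy1⟩ ⟨x2, y2⟩ ⟨hx2, hy2⟩ heq
    obtain ⟨e1, e2⟩ := List.append_inj heq (by rw [hlen1 x1 hx1, hlen1 x2 hx2])
    exact Prod.ext e1 e2
  have hD1fin : D1.Finite := (linOrd_finite A).subset (fun w hw => h1.1 w hw)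
  have hD2fin : D2.Finite := (linOrd_finite B).subset (fun w hw => h2.1 w hw)
  have hCfin : (concatDom D1 D2).Finite := by
    rw [hCeq]; exact (hD1fin.prod hD2fin).image _
  have hCcard : (concatDom D1 D2).ncard = D1.ncard * D2.ncard := by
    rw [hCeq, Set.ncard_image_of_injOn hinj, ← Nat.card_coe_set_eq,
      Nat.card_congr (Equiv.Set.prod D1 D2), Nat.card_prod,
      Nat.card_coe_set_eq, Nat.card_coe_set_eq]
  -- the intersection is the single order `u ++ v`
  have hI : concatDom D1 D2 ∩ shuffles A B u v = {u ++ v} := by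
    ext w
    constructor
    · rintro ⟨⟨x, hx, y, hy, rfl⟩, ⟨_, hra, hrb⟩⟩
      have hxA : ∀ a ∈ x, a ∈ A := fun a ha => ((h1.1 x hx).2) ▸ List.mem_toFinset.2 ha
      have hyB : ∀ a ∈ y, a ∈ B := fun a ha => ((h2.1 y hy).2) ▸ List.mem_toFinset.2 ha
      have hyA : ∀ a ∈ y, a ∉ A := fun a ha haA => Finset.disjoint_left.1 hAB haA (hyB a ha)
      have hxB : ∀ a ∈ x, a ∉ B := fun a ha => Finset.disjoint_left.1 hAB (hxA a ha)
      have e1 : x = u := by rw [← hra, restr_append_left' A x y hxA hyA]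
      have e2 : y = v := by rw [← hrb, restr_append_right' B x y hxB hyB]
      simp [e1, e2]
    · intro hw
      rw [Set.mem_singleton_iff] at hw
      subst hw
      refine ⟨⟨u, hu, v, hv, rfl⟩, ⟨?_, ?_⟩, ?_, ?_⟩
      · exact List.nodup_append.2 ⟨hun, hvn, fun a ha b hb hab => by subst hab; exact huB a ha (hvB a hb)⟩
      · rw [List.toFinset_append, huf, hvf]
      · exact restr_append_left' A u v huA hvA
      · exact restr_append_right' B u v huB hvB
  have hkey := Set.ncard_union_add_ncard_inter (concatDom D1 D2) (shuffles A B u v) hCfin hSfin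
  rw [hI, Set.ncard_singleton, hScard, hCcard] at hkey
  show (concatDom D1 D2 ∪ shuffles A B u v).ncard = _
  omega
end

section
/- Let D be a Condorcet domain of maximal width on a finite set A that is semi-connected. Then for any a ∈ A, the restriction of D to A \ {a} is also a semi-connected Condorcet domain of maximal width. -/
/-! Linear orders on a finite set `A` are encoded as duplicate-free lists
(top alternative first) whose set of entries is `A`. -/

variable {α β : Type*}

namespace Stmt10
open List

variable [DecidableEq α]

/-- Characterization of relative order by sublists. -/
theorem bef_iff_sublist : ∀ (v : List α), v.Nodup → ∀ p q : α, p ∈ v → q ∈ v →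
    (v.idxOf p < v.idxOf q ↔ [p, q] <+ v) := by
  intro v
  induction v with
  | nil => intro _ p q hp; simp at hp
  | cons h t ih =>
    intro hnd p q hp hq
    have hht : h ∉ t := (List.nodup_cons.1 hnd).1
    have hndt : t.Nodup := (List.nodup_cons.1 hnd).2
    by_cases hph : p = h
    · by_cases hqh : q = h
      · refine iff_of_false (by simp [hph, hqh]) fun hs => ?_
        have hs' : [h, h] <+ h :: t := by rw [hph, hqh] at hs; exact hs
        have h2 : (2 : ℕ) ≤ List.count h (h :: t) := by
          have := hs'.count_le h; simpa using this
        have h1 := List.nodup_iff_count_le_one.1 hnd h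
        omega
      · refine iff_of_true ?_ ?_
        · rw [hph, List.idxOf_cons_self, List.idxOf_cons_ne _ fun e => hqh e.symm]
          exact Nat.succ_pos _
        · rw [hph]
          refine List.cons_sublist_cons.2 (List.singleton_sublist.2 ?_)
          rcases List.mem_cons.1 hq with h1 | h1
          · exact absurd h1 hqh
          · exact h1
    · have hpt : p ∈ t := by
        rcases List.mem_cons.1 hp with h1 | h1
        · exact absurd h1 hph
        · exact h1
      by_cases hqh : q = h
      · refine iff_of_false ?_ fun hs => ?_
        · rw [hqh, List.idxOf_cons_self]; exact Nat.not_lt_zero _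
        · rw [hqh] at hs
          rcases List.sublist_cons_iff.1 hs with h1 | ⟨r, hr, h2⟩
          · exact hht (h1.subset (by simp))
          · injection hr with e1 e2; exact hph e1
      · have hqt : q ∈ t := by
          rcases List.mem_cons.1 hq with h1 | h1
          · exact absurd h1 hqh
          · exact h1
        have hiff : ([p, q] <+ h :: t) ↔ ([p, q] <+ t) := by
          constructor
          · intro hs
            rcases List.sublist_cons_iff.1 hs with h1 | ⟨r, hr, h2⟩
            · exact h1
            · injection hr with e1 e2; exact absurd e1 hph
          · exact fun hs => hs.cons h
        rw [List.idxOf_cons_ne _ fun e => hph e.symm,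
          List.idxOf_cons_ne _ fun e => hqh e.symm, Nat.succ_lt_succ_iff, hiff]
        exact ih hndt p q hpt hqt

theorem swap_sublist {l r : List α} {x y p q : α}
    (hpq : ¬(p = x ∧ q = y)) (h : [p, q] <+ l ++ x :: y :: r) :
    [p, q] <+ l ++ y :: x :: r := by
  rcases List.sublist_append_iff.1 h with ⟨l₁, l₂, heq, h₁, h₂⟩
  rcases l₁ with _ | ⟨a', l₁⟩
  · obtain rfl : l₂ = [p, q] := by simpa using heq.symm
    clear h₁ heq
    rcases List.sublist_cons_iff.1 h₂ with h3 | ⟨r', hr', h3⟩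
    · rcases List.sublist_cons_iff.1 h3 with h4 | ⟨r'', hr'', h4⟩
      · exact ((h4.cons x).cons y).trans (List.sublist_append_right l _)
      · injection hr'' with e1 e2; subst e1
        obtain rfl : r'' = [q] := e2.symm
        exact (List.cons_sublist_cons.2 (h4.cons x)).trans (List.sublist_append_right l _)
    · injection hr' with e1 e2; subst e1
      obtain rfl : r' = [q] := e2.symm
      have hq' : q ∈ y :: r := List.singleton_sublist.1 h3
      rcases List.mem_cons.1 hq' with e | e
      · exact absurd ⟨rfl, e⟩ hpq
      · exact ((List.cons_sublist_cons.2 (List.singleton_sublist.2 e)).cons y).trans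
          (List.sublist_append_right l _)
  · rcases l₁ with _ | ⟨b', l₁⟩
    · -- l₁ = [a'], so p = a', l₂ = [q]
      obtain ⟨rfl, hl₂⟩ : a' = p ∧ l₂ = [q] := by
        constructor
        · injection heq with e1 e2; exact e1.symm
        · injection heq with e1 e2; exact e2.symm
      subst hl₂
      have hq' : q ∈ x :: y :: r := List.singleton_sublist.1 h₂
      have hq'' : q ∈ y :: x :: r := by
        simp only [List.mem_cons] at hq' ⊢; tauto
      exact List.Sublist.append h₁ (List.singleton_sublist.2 hq'')
    · -- l₁ = a' :: b' :: l₁, so [p,q] = a'::b'::(l₁ ++ l₂)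
      have e3 : p = a' ∧ q = b' ∧ l₁ ++ l₂ = [] := by
        injection heq with e1 e2; injection e2 with e2 e4
        exact ⟨e1, e2, e4.symm⟩
      obtain ⟨rfl, rfl, e4⟩ := e3
      have : l₁ = [] := (List.append_eq_nil_iff.1 e4).1
      subst this
      exact h₁.trans (List.sublist_append_left l _)

theorem bef_swap {l r : List α} {x y : α} (hnd : (l ++ x :: y :: r).Nodup)
    {p q : α} (hp : p ∈ l ++ x :: y :: r) (hq : q ∈ l ++ x :: y :: r)
    (h1 : ¬(p = x ∧ q = y)) (h2 : ¬(p = y ∧ q = x)) :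
    ((l ++ y :: x :: r).idxOf p < (l ++ y :: x :: r).idxOf q ↔
      (l ++ x :: y :: r).idxOf p < (l ++ x :: y :: r).idxOf q) := by
  have hperm : (l ++ x :: y :: r).Perm (l ++ y :: x :: r) :=
    List.Perm.append_left l (List.Perm.swap x y r).symm
  have hnd' : (l ++ y :: x :: r).Nodup := hperm.nodup_iff.1 hnd
  rw [bef_iff_sublist _ hnd' p q (hperm.mem_iff.1 hp) (hperm.mem_iff.1 hq),
    bef_iff_sublist _ hnd p q hp hq]
  constructor
  · intro hs; exact swap_sublist h2 hs
  · intro hs; exact swap_sublist h1 hs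

/-- The set of pairs ordered `p` before `q` in `w` but `q` before `p` in `v`. -/
def InvSet (T : Finset α) (w v : List α) : Finset (α × α) :=
  (T ×ˢ T).filter fun pq => w.idxOf pq.1 < w.idxOf pq.2 ∧ v.idxOf pq.2 < v.idxOf pq.1

theorem mem_InvSet {T : Finset α} {w v : List α} {pq : α × α} :
    pq ∈ InvSet T w v ↔ pq.1 ∈ T ∧ pq.2 ∈ T ∧
      w.idxOf pq.1 < w.idxOf pq.2 ∧ v.idxOf pq.2 < v.idxOf pq.1 := by
  simp [InvSet, Finset.mem_filter, Finset.mem_product, and_assoc]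

theorem InvSet_self (T : Finset α) (w : List α) : InvSet T w w = ∅ := by
  ext pq; simp only [mem_InvSet, Finset.notMem_empty, iff_false]
  rintro ⟨-, -, h1, h2⟩; omega

theorem idxOf_reverse {v : List α} (hnd : v.Nodup) {x : α} (hx : x ∈ v) :
    v.reverse.idxOf x = v.length - 1 - v.idxOf x := by
  have h1 : v.idxOf x < v.length := List.idxOf_lt_length_iff.2 hx
  have h2 : v.length - 1 - v.idxOf x < v.reverse.length := by
    rw [List.length_reverse]; omega
  have h3 : v.reverse[v.length - 1 - v.idxOf x]'h2 = x := by
    rw [List.getElem_reverse]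
    have e : v.length - 1 - (v.length - 1 - v.idxOf x) = v.idxOf x := by omega
    simp only [e]
    exact List.getElem_idxOf h1
  have h4 := List.Nodup.idxOf_getElem (List.nodup_reverse.2 hnd) _ h2
  rw [h3] at h4
  exact h4

theorem card_range_lt (n : ℕ) :
    ((Finset.range n ×ˢ Finset.range n).filter fun ij : ℕ × ℕ => ij.1 < ij.2).card
      = n.choose 2 := by
  induction n with
  | zero => simp
  | succ n ih =>
    have hsplit : ((Finset.range (n+1) ×ˢ Finset.range (n+1)).filter
        fun ij : ℕ × ℕ => ij.1 < ij.2)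
        = ((Finset.range n ×ˢ Finset.range n).filter fun ij : ℕ × ℕ => ij.1 < ij.2)
          ∪ (Finset.range n).image (fun i => (i, n)) := by
      ext ⟨i, j⟩
      simp only [Finset.mem_filter, Finset.mem_product, Finset.mem_range, Finset.mem_union,
        Finset.mem_image, Prod.mk.injEq]
      constructor
      · rintro ⟨⟨hi, hj⟩, hij⟩
        by_cases hjn : j = n
        · exact Or.inr ⟨i, by omega, rfl, hjn.symm⟩
        · exact Or.inl ⟨⟨by omega, by omega⟩, hij⟩
      · rintro (⟨⟨hi, hj⟩, hij⟩ | ⟨k, hk, rfl, rfl⟩)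
        · exact ⟨⟨by omega, by omega⟩, hij⟩
        · exact ⟨⟨by omega, by omega⟩, hk⟩
    rw [hsplit, Finset.card_union_of_disjoint, ih,
      Finset.card_image_of_injective _ (fun i j h => by simpa using h), Finset.card_range]
    · have h := Nat.choose_succ_succ n 1
      norm_num at h
      omega
    · rw [Finset.disjoint_right]
      rintro ⟨i, j⟩ hmem hmem'
      simp only [Finset.mem_image, Prod.mk.injEq] at hmem
      simp only [Finset.mem_filter, Finset.mem_product, Finset.mem_range] at hmem'
      obtain ⟨k, hk, rfl, rfl⟩ := hmem
      omega

theorem card_lt_pairs {v : List α} (hnd : v.Nodup) :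
    ((v.toFinset ×ˢ v.toFinset).filter fun pq : α × α =>
      v.idxOf pq.1 < v.idxOf pq.2).card = v.length.choose 2 := by
  rw [← card_range_lt v.length]
  apply Finset.card_bij (fun pq _ => (v.idxOf pq.1, v.idxOf pq.2))
  · rintro ⟨p, q⟩ hmem
    simp only [Finset.mem_filter, Finset.mem_product, List.mem_toFinset] at hmem
    simp only [Finset.mem_filter, Finset.mem_product, Finset.mem_range]
    exact ⟨⟨List.idxOf_lt_length_iff.2 hmem.1.1, List.idxOf_lt_length_iff.2 hmem.1.2⟩, hmem.2⟩
  · rintro ⟨p, q⟩ hmem ⟨p', q'⟩ hmem' heq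
    simp only [Finset.mem_filter, Finset.mem_product, List.mem_toFinset] at hmem hmem'
    simp only [Prod.mk.injEq] at heq ⊢
    constructor
    · exact (List.idxOf_inj hmem.1.1).1 heq.1
    · exact (List.idxOf_inj hmem.1.2).1 heq.2
  · rintro ⟨i, j⟩ hmem
    simp only [Finset.mem_filter, Finset.mem_product, Finset.mem_range] at hmem
    obtain ⟨⟨hi, hj⟩, hij⟩ := hmem
    refine ⟨(v[i], v[j]), ?_, ?_⟩
    · simp only [Finset.mem_filter, Finset.mem_product, List.mem_toFinset]
      refine ⟨⟨List.getElem_mem _, List.getElem_mem _⟩, ?_⟩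
      rw [List.Nodup.idxOf_getElem hnd i hi, List.Nodup.idxOf_getElem hnd j hj]
      exact hij
    · simp only [Prod.mk.injEq]
      rw [List.Nodup.idxOf_getElem hnd i hi, List.Nodup.idxOf_getElem hnd j hj]
      exact ⟨rfl, rfl⟩

theorem inv_rev {v : List α} (hnd : v.Nodup) :
    (InvSet v.toFinset v v.reverse).card = v.length.choose 2 := by
  have hset : InvSet v.toFinset v v.reverse
      = (v.toFinset ×ˢ v.toFinset).filter fun pq : α × α =>
          v.idxOf pq.1 < v.idxOf pq.2 := by
    ext ⟨p, q⟩
    simp only [mem_InvSet, Finset.mem_filter, Finset.mem_product, List.mem_toFinset]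
    constructor
    · rintro ⟨hp, hq, h1, h2⟩; exact ⟨⟨hp, hq⟩, h1⟩
    · rintro ⟨⟨hp, hq⟩, h1⟩
      refine ⟨hp, hq, h1, ?_⟩
      rw [idxOf_reverse hnd hp, idxOf_reverse hnd hq]
      have := List.idxOf_lt_length_iff.2 hp
      have := List.idxOf_lt_length_iff.2 hq
      omega
  rw [hset]
  exact card_lt_pairs hnd

theorem InvSet_swap_subset {T : Finset α} {w : List α} {l r : List α} {x y : α}
    (hnd : (l ++ x :: y :: r).Nodup) (hT : ∀ z ∈ T, z ∈ l ++ x :: y :: r) :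
    InvSet T w (l ++ y :: x :: r) ⊆
      insert (if w.idxOf x < w.idxOf y then (x, y) else (y, x))
        (InvSet T w (l ++ x :: y :: r)) := by
  rintro ⟨p, q⟩ hpq
  rw [mem_InvSet] at hpq
  obtain ⟨hp, hq, hw, hv⟩ := hpq
  dsimp only at hp hq hw hv
  by_cases hc : (p = x ∧ q = y) ∨ (p = y ∧ q = x)
  · rcases hc with ⟨rfl, rfl⟩ | ⟨rfl, rfl⟩
    · rw [if_pos hw]; exact Finset.mem_insert_self _ _
    · rw [if_neg (by omega)]; exact Finset.mem_insert_self _ _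
  · push_neg at hc
    refine Finset.mem_insert_of_mem ?_
    rw [mem_InvSet]
    refine ⟨hp, hq, hw, ?_⟩
    exact (bef_swap hnd (hT q hq) (hT p hp) (by tauto) (by tauto)).1 hv

theorem InvSet_swap_eq {T : Finset α} {w : List α} {l r : List α} {x y : α}
    (hnd : (l ++ x :: y :: r).Nodup) (hT : ∀ z ∈ T, z ∈ l ++ x :: y :: r)
    (hcard : (InvSet T w (l ++ y :: x :: r)).card
      = (InvSet T w (l ++ x :: y :: r)).card + 1) :
    InvSet T w (l ++ y :: x :: r)
      = insert (if w.idxOf x < w.idxOf y then (x, y) else (y, x))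
          (InvSet T w (l ++ x :: y :: r)) ∧
    (if w.idxOf x < w.idxOf y then (x, y) else (y, x))
      ∉ InvSet T w (l ++ x :: y :: r) := by
  set e := (if w.idxOf x < w.idxOf y then (x, y) else (y, x)) with he
  set S := InvSet T w (l ++ x :: y :: r) with hS
  set S' := InvSet T w (l ++ y :: x :: r) with hS'
  have hsub : S' ⊆ insert e S := InvSet_swap_subset hnd hT
  have hc1 : S'.card ≤ (insert e S).card := Finset.card_le_card hsub
  have hc2 : (insert e S).card ≤ S.card + 1 := Finset.card_insert_le _ _
  have heq : S' = insert e S :=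
    Finset.eq_of_subset_of_card_le hsub (by omega)
  refine ⟨heq, fun hmem => ?_⟩
  have : insert e S = S := Finset.insert_eq_self.2 hmem
  rw [heq, this] at hcard
  omega

theorem InvSet_inter {T T' : Finset α} (h : T ⊆ T') (w v : List α) :
    InvSet T w v = InvSet T' w v ∩ T ×ˢ T := by
  ext ⟨p, q⟩
  simp only [mem_InvSet, Finset.mem_inter, Finset.mem_product]
  constructor
  · rintro ⟨hp, hq, h1, h2⟩
    exact ⟨⟨h hp, h hq, h1, h2⟩, hp, hq⟩
  · rintro ⟨⟨-, -, h1, h2⟩, hp, hq⟩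
    exact ⟨hp, hq, h1, h2⟩

theorem bef_restr {B : Finset α} {v : List α} (hnd : v.Nodup) (hB : ∀ z ∈ B, z ∈ v)
    {p q : α} (hp : p ∈ B) (hq : q ∈ B) :
    ((restr B v).idxOf p < (restr B v).idxOf q ↔ v.idxOf p < v.idxOf q) := by
  by_cases hpq : p = q
  · subst hpq; simp
  · have hndr : (restr B v).Nodup := hnd.filter _
    have hpr : p ∈ restr B v := by
      simp only [restr, List.mem_filter]
      exact ⟨hB p hp, by simpa using hp⟩
    have hqr : q ∈ restr B v := by
      simp only [restr, List.mem_filter]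
      exact ⟨hB q hq, by simpa using hq⟩
    rw [bef_iff_sublist _ hndr p q hpr hqr, bef_iff_sublist _ hnd p q (hB p hp) (hB q hq)]
    constructor
    · intro hs; exact hs.trans List.filter_sublist
    · intro hs
      have h2 := hs.filter (fun z => decide (z ∈ B))
      simpa [restr, hp, hq] using h2

theorem InvSet_restr {B : Finset α} {w v : List α} (hw : w.Nodup) (hv : v.Nodup)
    (hBw : ∀ z ∈ B, z ∈ w) (hBv : ∀ z ∈ B, z ∈ v) :
    InvSet B (restr B w) (restr B v) = InvSet B w v := by
  ext ⟨p, q⟩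
  simp only [mem_InvSet]
  refine and_congr_right fun hp => and_congr_right fun hq => ?_
  rw [bef_restr hw hBw hp hq, bef_restr hv hBv hq hp]

theorem unit_steps (g : ℕ → ℕ) (N : ℕ) (h0 : g 0 = 0) (hN : g N = N)
    (hstep : ∀ i < N, g (i + 1) ≤ g i + 1) : ∀ i ≤ N, g i = i := by
  have up : ∀ d i, i + d ≤ N → g (i + d) ≤ g i + d := by
    intro d
    induction d with
    | zero => intro i _; simp
    | succ d ih =>
      intro i h
      have h1 := ih i (by omega)
      have h2 := hstep (i + d) (by omega)
      have e : i + (d + 1) = (i + d) + 1 := by omega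
      rw [e]
      omega
  intro i hi
  have h1 := up i 0 (by omega)
  have h2 := up (N - i) i (by omega)
  have e1 : 0 + i = i := by omega
  have e2 : i + (N - i) = N := by omega
  rw [e1] at h1
  rw [e2] at h2
  omega

theorem chain_reparam {γ : Type*} (f : ℕ → γ) (g : ℕ → ℕ) (R : γ → γ → Prop) (N M : ℕ)
    (h0 : g 0 = 0) (hN : g N = M)
    (hstep : ∀ i < N, (f (i + 1) = f i ∧ g (i + 1) = g i) ∨
      (R (f i) (f (i + 1)) ∧ g (i + 1) = g i + 1)) :
    ∃ t : ℕ → ℕ, (∀ k ≤ M, t k ≤ N) ∧ f (t 0) = f 0 ∧ f (t M) = f N ∧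
      ∀ k < M, R (f (t k)) (f (t (k + 1))) := by
  classical
  have hg1 : ∀ i < N, g (i + 1) ≤ g i + 1 ∧ g i ≤ g (i + 1) := by
    intro i hi; rcases hstep i hi with ⟨-, h⟩ | ⟨-, h⟩ <;> omega
  have hmono : ∀ d i, i + d ≤ N → g i ≤ g (i + d) := by
    intro d
    induction d with
    | zero => intro i _; simp
    | succ d ih =>
      intro i h
      have h1 := ih i (by omega)
      have h2 := (hg1 (i + d) (by omega)).2
      have e : i + (d + 1) = (i + d) + 1 := by omega
      rw [e]
      omega
  have hfconst : ∀ d i, i + d ≤ N → g (i + d) = g i → f (i + d) = f i := by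
    intro d
    induction d with
    | zero => intro i _ _; rfl
    | succ d ih =>
      intro i hle heq
      have e : i + (d + 1) = (i + d) + 1 := by omega
      rw [e] at heq ⊢
      have hm1 := hmono d i (by omega)
      have hm2 := (hg1 (i + d) (by omega)).2
      have e1 : g (i + d) = g i := by omega
      have e2 : f (i + d) = f i := ih i (by omega) e1
      rcases hstep (i + d) (by omega) with ⟨hf, -⟩ | ⟨-, hg⟩
      · rw [hf]; exact e2
      · omega
  have hex : ∀ k, k ≤ M → ∃ i, i ≤ N ∧ k ≤ g i := fun k hk => ⟨N, le_rfl, by omega⟩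
  set t : ℕ → ℕ := fun k => if h : ∃ i, i ≤ N ∧ k ≤ g i then Nat.find h else 0 with ht
  have htspec : ∀ k ≤ M, t k ≤ N ∧ g (t k) = k ∧ ∀ j < t k, g j < k := by
    intro k hk
    have h := hex k hk
    have htk : t k = Nat.find h := by rw [ht]; exact dif_pos h
    obtain ⟨h1, h2⟩ := Nat.find_spec h
    rw [htk]
    refine ⟨h1, ?_, ?_⟩
    · rcases Nat.eq_zero_or_pos (Nat.find h) with he | he
      · rw [he]; rw [he] at h2; omega
      · have hfn : Nat.find h - 1 ≤ N := by omega
        have hlt : g (Nat.find h - 1) < k := by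
          by_contra hcon
          exact Nat.find_min h (m := Nat.find h - 1) (by omega) ⟨hfn, by omega⟩
        have hs1 := (hg1 (Nat.find h - 1) (by omega)).1
        have e : Nat.find h - 1 + 1 = Nat.find h := by omega
        rw [e] at hs1
        omega
    · intro j hj
      have : ¬(j ≤ N ∧ k ≤ g j) := Nat.find_min h hj
      have hjN : j ≤ N := by omega
      by_contra hcon
      exact this ⟨hjN, by omega⟩
  refine ⟨t, fun k hk => (htspec k hk).1, ?_, ?_, ?_⟩
  · have h := htspec 0 (Nat.zero_le _)
    have ht0 : t 0 = 0 := by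
      by_contra hne
      have := h.2.2 0 (by omega)
      omega
    rw [ht0]
  · obtain ⟨h1, h2, -⟩ := htspec M le_rfl
    have hc : f (t M + (N - t M)) = f (t M) := by
      refine hfconst (N - t M) (t M) (by omega) ?_
      have e : t M + (N - t M) = N := by omega
      rw [e, hN, h2]
    have e : t M + (N - t M) = N := by omega
    rw [e] at hc
    exact hc.symm
  · intro k hk
    obtain ⟨hk1, hk2, hk3⟩ := htspec k (by omega)
    obtain ⟨hj1, hj2, hj3⟩ := htspec (k + 1) (by omega)
    have hj0 : 0 < t (k + 1) := by
      by_contra h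
      have he : t (k + 1) = 0 := by omega
      rw [he] at hj2
      omega
    have hgj1 : g (t (k + 1) - 1) < k + 1 := hj3 _ (by omega)
    have hs := (hg1 (t (k + 1) - 1) (by omega)).1
    have e : t (k + 1) - 1 + 1 = t (k + 1) := by omega
    rw [e] at hs
    have hgj : g (t (k + 1) - 1) = k := by omega
    have htk : t k ≤ t (k + 1) - 1 := by
      by_contra hlt
      have := hk3 (t (k + 1) - 1) (by omega)
      omega
    have hfc : f (t k + ((t (k + 1) - 1) - t k)) = f (t k) := by
      refine hfconst _ _ (by omega) ?_
      have e2 : t k + ((t (k + 1) - 1) - t k) = t (k + 1) - 1 := by omega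
      rw [e2, hgj, hk2]
    have e2 : t k + ((t (k + 1) - 1) - t k) = t (k + 1) - 1 := by omega
    rw [e2] at hfc
    rcases hstep (t (k + 1) - 1) (by omega) with ⟨-, hgs⟩ | ⟨hR, -⟩
    · rw [e] at hgs; omega
    · rw [e] at hR
      rw [hfc] at hR
      exact hR

theorem lift_profile {D : Set (List α)} {B : Finset α} :
    ∀ P : List (List α), (∀ v ∈ P, v ∈ restr B '' D) →
      ∃ Q : List (List α), (∀ v ∈ Q, v ∈ D) ∧ P = Q.map (restr B) := by
  intro P
  induction P with
  | nil => exact fun _ => ⟨[], by simp, rfl⟩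
  | cons p P ih =>
    intro hP
    obtain ⟨Q, hQ, rfl⟩ := ih fun v hv => hP v (List.mem_cons_of_mem _ hv)
    obtain ⟨v, hv, hvp⟩ := hP p List.mem_cons_self
    refine ⟨v :: Q, ?_, by simp [hvp]⟩
    intro u hu
    rcases List.mem_cons.1 hu with rfl | hu
    · exact hv
    · exact hQ u hu

end Stmt10

/-- the restriction of a semi-connected Condorcet domain of
maximal width to `A \ {a}` is again a semi-connected Condorcet domain of
maximal width. -/
theorem stmt_10 [DecidableEq α] (A : Finset α) (D : Set (List α)) (a : α)
    (ha : a ∈ A) (hC : IsCondorcet A D) (hW : MaxWidth D)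
    (hS : SemiConnected A D) :
    IsCondorcet (A.erase a) (restr (A.erase a) '' D) ∧
      MaxWidth (restr (A.erase a) '' D) ∧
      SemiConnected (A.erase a) (restr (A.erase a) '' D) := by
  classical
  open List Stmt10 in
  obtain ⟨hD, hODD⟩ := hC
  set B := A.erase a with hB
  have hBA : B ⊆ A := Finset.erase_subset _ _
  have haB : a ∉ B := Finset.notMem_erase _ _
  have hmemA : ∀ v ∈ D, ∀ z ∈ B, z ∈ v := by
    intro v hv z hz
    rw [← List.mem_toFinset, (hD v hv).2]
    exact hBA hz
  have hrestr_lin : ∀ v ∈ D, IsLinOrd B (restr B v) := by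
    intro v hv
    obtain ⟨h1, h2⟩ := hD v hv
    refine ⟨h1.filter _, ?_⟩
    ext z
    simp only [restr, List.mem_toFinset, List.mem_filter, decide_eq_true_eq]
    constructor
    · rintro ⟨-, hzB⟩; exact hzB
    · intro hzB
      refine ⟨?_, hzB⟩
      rw [← List.mem_toFinset, h2]
      exact hBA hzB
  have hmaj : ∀ Q : List (List α), (∀ v ∈ Q, v ∈ D) → ∀ p ∈ B, ∀ q ∈ B,
      (Maj (Q.map (restr B)) p q ↔ Maj Q p q) := by
    intro Q hQ p hp q hq
    have key : ∀ p' q' : α, p' ∈ B → q' ∈ B →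
        (Q.map (restr B)).countP (fun w => decide (w.idxOf p' < w.idxOf q'))
          = Q.countP (fun w => decide (w.idxOf p' < w.idxOf q')) := by
      intro p' q' hp' hq'
      rw [List.countP_map]
      apply List.countP_congr
      intro v hv
      simp only [Function.comp_apply, decide_eq_true_eq]
      exact Stmt10.bef_restr (hD v (hQ v hv)).1 (hmemA v (hQ v hv)) hp' hq'
    simp only [Maj]
    rw [key p q hp hq, key q p hq hp]
  refine ⟨⟨?_, ?_⟩, ?_, ?_⟩
  · rintro w' ⟨v, hv, rfl⟩
    exact hrestr_lin v hv
  · intro P hP hodd x hx y hy z hz hxy hyz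
    obtain ⟨Q, hQ, rfl⟩ := Stmt10.lift_profile P hP
    rw [hmaj Q hQ x hx z hz]
    rw [hmaj Q hQ x hx y hy] at hxy
    rw [hmaj Q hQ y hy z hz] at hyz
    exact hODD Q hQ (by simpa using hodd) x (hBA hx) y (hBA hy) z (hBA hz) hxy hyz
  · obtain ⟨v, hv, hvr⟩ := hW
    refine ⟨restr B v, ⟨v, hv, rfl⟩, ⟨v.reverse, hvr, ?_⟩⟩
    simp [restr]
  · obtain ⟨w₀, c, hw₀, hc0, hcN, hcmem, hcswap⟩ := hS
    set N := A.card.choose 2 with hN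
    obtain ⟨hw₀nd, hw₀A⟩ := hD w₀ hw₀
    have hlen : w₀.length = A.card := by
      rw [← hw₀A, List.toFinset_card_of_nodup hw₀nd]
    have hBw₀ : ∀ z ∈ B, z ∈ w₀ := hmemA w₀ hw₀
    set u := restr B w₀ with hu
    obtain ⟨hund, huB⟩ := hrestr_lin w₀ hw₀
    have hulen : u.length = B.card := by
      rw [← huB, List.toFinset_card_of_nodup hund]
    set M := B.card.choose 2 with hM
    have hclin : ∀ i, i ≤ N → (c i).Nodup ∧ (c i).toFinset = A :=
      fun i hi => hD _ (hcmem i hi)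
    have hBc : ∀ i, i ≤ N → ∀ z ∈ B, z ∈ c i := fun i hi => hmemA _ (hcmem i hi)
    have hFstep : ∀ i, i < N →
        (Stmt10.InvSet A w₀ (c (i + 1))).card ≤ (Stmt10.InvSet A w₀ (c i)).card + 1 := by
      intro i hi
      obtain ⟨l, r, x, y, he1, he2⟩ := hcswap i hi
      have hnd : (l ++ x :: y :: r).Nodup := by rw [← he1]; exact (hclin i hi.le).1
      have h2A := (hclin i hi.le).2
      rw [he1] at h2A
      have hTA : ∀ z ∈ A, z ∈ l ++ x :: y :: r := fun z hz => by
        rw [← List.mem_toFinset, h2A]; exact hz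
      rw [he1, he2]
      calc (Stmt10.InvSet A w₀ (l ++ y :: x :: r)).card
          ≤ (insert (if w₀.idxOf x < w₀.idxOf y then (x, y) else (y, x))
              (Stmt10.InvSet A w₀ (l ++ x :: y :: r))).card :=
            Finset.card_le_card (Stmt10.InvSet_swap_subset hnd hTA)
        _ ≤ _ + 1 := Finset.card_insert_le _ _
    have hF0 : (Stmt10.InvSet A w₀ (c 0)).card = 0 := by
      rw [hc0, Stmt10.InvSet_self]; simp
    have hFN : (Stmt10.InvSet A w₀ (c N)).card = N := by
      rw [hcN]
      have hAw : A = w₀.toFinset := hw₀A.symm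
      rw [hAw, Stmt10.inv_rev hw₀nd, hlen]
    have hFcard : ∀ i, i ≤ N → (Stmt10.InvSet A w₀ (c i)).card = i :=
      Stmt10.unit_steps (fun i => (Stmt10.InvSet A w₀ (c i)).card) N hF0 hFN hFstep
    have hstepBG : ∀ i, i < N →
        ((restr B (c (i + 1)) = restr B (c i) ∧
            (Stmt10.InvSet B w₀ (c (i + 1))).card = (Stmt10.InvSet B w₀ (c i)).card) ∨
          (AdjSwap (restr B (c i)) (restr B (c (i + 1))) ∧
            (Stmt10.InvSet B w₀ (c (i + 1))).card = (Stmt10.InvSet B w₀ (c i)).card + 1)) := by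
      intro i hi
      obtain ⟨l, r, x, y, he1, he2⟩ := hcswap i hi
      have hnd : (l ++ x :: y :: r).Nodup := by rw [← he1]; exact (hclin i hi.le).1
      have h2A := (hclin i hi.le).2
      rw [he1] at h2A
      have hTA : ∀ z ∈ A, z ∈ l ++ x :: y :: r := fun z hz => by
        rw [← List.mem_toFinset, h2A]; exact hz
      have hxA : x ∈ A := by rw [← h2A]; simp
      have hyA : y ∈ A := by rw [← h2A]; simp
      by_cases hax : x = a ∨ y = a
      · left
        have hfe : restr B (c (i + 1)) = restr B (c i) := by
          rw [he1, he2]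
          rcases hax with rfl | rfl
          · simp [restr, List.filter_append, List.filter_cons, haB]
          · simp [restr, List.filter_append, List.filter_cons, haB]
        refine ⟨hfe, ?_⟩
        have hr1 : Stmt10.InvSet B w₀ (c (i + 1)) = Stmt10.InvSet B u (restr B (c (i + 1))) :=
          (Stmt10.InvSet_restr hw₀nd (hclin (i + 1) (by omega)).1 hBw₀ (hBc (i + 1) (by omega))).symm
        have hr2 : Stmt10.InvSet B w₀ (c i) = Stmt10.InvSet B u (restr B (c i)) :=
          (Stmt10.InvSet_restr hw₀nd (hclin i (by omega)).1 hBw₀ (hBc i (by omega))).symm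
        rw [hr1, hr2, hfe]
      · right
        push_neg at hax
        have hxB : x ∈ B := Finset.mem_erase.2 ⟨hax.1, hxA⟩
        have hyB : y ∈ B := Finset.mem_erase.2 ⟨hax.2, hyA⟩
        have e1 : restr B (c i) = restr B l ++ x :: y :: restr B r := by
          rw [he1]; simp [restr, List.filter_append, List.filter_cons, hxB, hyB]
        have e2 : restr B (c (i + 1)) = restr B l ++ y :: x :: restr B r := by
          rw [he2]; simp [restr, List.filter_append, List.filter_cons, hxB, hyB]
        refine ⟨⟨restr B l, restr B r, x, y, e1, e2⟩, ?_⟩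
        have hcardA : (Stmt10.InvSet A w₀ (l ++ y :: x :: r)).card
            = (Stmt10.InvSet A w₀ (l ++ x :: y :: r)).card + 1 := by
          have c1 := hFcard (i + 1) (by omega)
          have c2 := hFcard i (by omega)
          rw [he1] at c2; rw [he2] at c1
          omega
        obtain ⟨hEeq, hEnot⟩ := Stmt10.InvSet_swap_eq hnd hTA hcardA
        have heB : (if w₀.idxOf x < w₀.idxOf y then (x, y) else (y, x)) ∈ B ×ˢ B := by
          split <;> simp [Finset.mem_product, hxB, hyB]
        rw [he1, he2, Stmt10.InvSet_inter hBA w₀ (l ++ y :: x :: r),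
          Stmt10.InvSet_inter hBA w₀ (l ++ x :: y :: r), hEeq,
          Finset.insert_inter_of_mem heB]
        rw [Finset.card_insert_of_notMem (fun hmem => hEnot (Finset.mem_inter.1 hmem).1)]
    have hg0 : (Stmt10.InvSet B w₀ (c 0)).card = 0 := by
      rw [hc0, Stmt10.InvSet_self]; simp
    have hgN : (Stmt10.InvSet B w₀ (c N)).card = M := by
      rw [hcN]
      have hr : Stmt10.InvSet B w₀ w₀.reverse = Stmt10.InvSet B u (restr B w₀.reverse) :=
        (Stmt10.InvSet_restr hw₀nd (List.nodup_reverse.2 hw₀nd) hBw₀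
          (fun z hz => List.mem_reverse.2 (hBw₀ z hz))).symm
      have hur : restr B w₀.reverse = u.reverse := by simp [restr, hu]
      rw [hr, hur, ← huB, Stmt10.inv_rev hund, hulen]
    obtain ⟨t, htN, ht0, htM, htR⟩ := Stmt10.chain_reparam (fun i => restr B (c i))
      (fun i => (Stmt10.InvSet B w₀ (c i)).card) AdjSwap N M hg0 hgN hstepBG
    refine ⟨u, fun k => restr B (c (t k)), ⟨w₀, hw₀, rfl⟩, ?_, ?_, ?_, ?_⟩
    · have h := ht0
      simp only at h ⊢
      rw [h, hc0]
    · have h := htM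
      simp only at h ⊢
      rw [h, hcN]
      simp [restr, hu]
    · intro i hi
      exact ⟨c (t i), hcmem _ (htN i hi), rfl⟩
    · intro i hi
      exact htR i hi
end

section
/- Every semi-connected Condorcet domain of maximal width on a finite set A is a peak-pit domain: for every triple {a,b,c} ⊆ A, there is x in the triple such that the restriction of the domain to the triple satisfies xN1 (x never top) or xN3 (x never bottom). -/
/-! Linear orders on a finite set `A` are encoded as duplicate-free lists
(top alternative first) whose set of entries is `A`. -/

variable {α β : Type*}

-- AUXILIARY LEMMAS

section Aux

variable [DecidableEq α]

lemma sixlist {a b c : α} (hab : a ≠ b) (hac : a ≠ c) (hbc : b ≠ c)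
    {l : List α} (hn : l.Nodup) (hf : l.toFinset = {a, b, c}) :
    l = [a,b,c] ∨ l = [a,c,b] ∨ l = [b,a,c] ∨ l = [b,c,a] ∨ l = [c,a,b] ∨ l = [c,b,a] := by
  have hlen : l.length = 3 := by
    have := List.toFinset_card_of_nodup hn
    rw [hf] at this
    rw [← this]
    rw [Finset.card_insert_of_notMem (by simp [hab, hac]),
      Finset.card_insert_of_notMem (by simp [hbc]), Finset.card_singleton]
  match l, hlen with
  | [x, y, z], _ =>
    have hx : x = a ∨ x = b ∨ x = c := by
      have : x ∈ ({a,b,c} : Finset α) := by rw [← hf]; simp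
      simpa using this
    have hy : y = a ∨ y = b ∨ y = c := by
      have : y ∈ ({a,b,c} : Finset α) := by rw [← hf]; simp
      simpa using this
    have hz : z = a ∨ z = b ∨ z = c := by
      have : z ∈ ({a,b,c} : Finset α) := by rw [← hf]; simp
      simpa using this
    have hxy : x ≠ y := by simp [List.nodup_cons] at hn; tauto
    have hxz : x ≠ z := by simp [List.nodup_cons] at hn; tauto
    have hyz : y ≠ z := by simp [List.nodup_cons] at hn; tauto
    rcases hx with rfl|rfl|rfl <;> rcases hy with rfl|rfl|rfl <;> rcases hz with rfl|rfl|rfl <;>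
      simp_all

lemma idx_filter_lt {p : α → Bool} {u v : α}
    (hpu : p u = true) (hpv : p v = true) :
    ∀ {w : List α}, w.Nodup → u ∈ w → v ∈ w →
    (w.filter p).idxOf u < (w.filter p).idxOf v → w.idxOf u < w.idxOf v := by
  intro w
  induction w with
  | nil => simp
  | cons h t ih =>
    intro hn hu hv hlt
    have hnt : t.Nodup := hn.of_cons
    by_cases heu : h = u
    · subst heu
      have hvu : v ≠ h := by rintro rfl; exact lt_irrefl _ hlt
      rw [List.idxOf_cons_self, List.idxOf_cons_ne _ (fun hh => hvu hh.symm)]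
      exact Nat.succ_pos _
    · by_cases hev : h = v
      · subst hev
        rw [List.filter_cons_of_pos hpv, List.idxOf_cons_self] at hlt
        omega
      · have hu' : u ∈ t := by rcases hu with _ | hu'; exact absurd rfl heu; assumption
        have hv' : v ∈ t := by rcases hv with _ | hv'; exact absurd rfl hev; assumption
        rw [List.idxOf_cons_ne _ heu, List.idxOf_cons_ne _ hev]
        have key : (t.filter p).idxOf u < (t.filter p).idxOf v := by
          rcases hp : p h with _ | _
          · rwa [List.filter_cons_of_neg (by simp [hp])] at hlt
          · rw [List.filter_cons_of_pos hp, List.idxOf_cons_ne _ heu,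
              List.idxOf_cons_ne _ hev] at hlt
            omega
        exact Nat.succ_lt_succ (ih hnt hu' hv' key)

lemma nat_ivt_up (f : ℕ → ℕ) (k : ℕ) :
    ∀ N, (∀ i < N, f (i+1) ≤ f i + 1) → f 0 ≤ k → k ≤ f N → ∃ i ≤ N, f i = k := by
  intro N
  induction N with
  | zero => intro _ h1 h2; exact ⟨0, le_refl _, le_antisymm h1 h2⟩
  | succ n ih =>
    intro hstep h0 hN
    by_cases hk : k ≤ f n
    · obtain ⟨i, hi, hfi⟩ := ih (fun i hi => hstep i (by omega)) h0 hk
      exact ⟨i, by omega, hfi⟩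
    · have := hstep n (by omega)
      exact ⟨n+1, le_refl _, by omega⟩

lemma nat_ivt (f : ℕ → ℕ) (k N : ℕ)
    (hstep : ∀ i < N, f (i+1) ≤ f i + 1 ∧ f i ≤ f (i+1) + 1)
    (h : (f 0 ≤ k ∧ k ≤ f N) ∨ (f N ≤ k ∧ k ≤ f 0)) : ∃ i ≤ N, f i = k := by
  rcases h with ⟨h0, hN⟩ | ⟨hN, h0⟩
  · exact nat_ivt_up f k N (fun i hi => (hstep i hi).1) h0 hN
  · obtain ⟨i, hi, hfi⟩ := nat_ivt_up (fun i => f (N - i)) k N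
      (fun i hi => by
        have := (hstep (N - (i+1)) (by omega)).2
        have he : N - i = N - (i+1) + 1 := by omega
        show f (N - (i+1)) ≤ f (N - i) + 1
        rw [he]; exact this) hN (by simpa using h0)
    exact ⟨N - i, by omega, hfi⟩

lemma indexOf_swap_bound (p : α → Bool) (l r : List α) {u v : α}
    (huv : u ≠ v) (x : α) :
    ((l ++ v :: u :: r).filter p).idxOf x ≤ ((l ++ u :: v :: r).filter p).idxOf x + 1 ∧
    ((l ++ u :: v :: r).filter p).idxOf x ≤ ((l ++ v :: u :: r).filter p).idxOf x + 1 := by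
  rw [List.filter_append, List.filter_append]
  rcases hu : p u with _ | _ <;> rcases hv : p v with _ | _ <;>
    simp only [List.filter_cons, hu, hv, if_true, if_false, Bool.false_eq_true, ite_true,
      ite_false]
  · omega
  · omega
  · omega
  · set L := l.filter p with hL
    set R := r.filter p with hR
    by_cases hxL : x ∈ L
    · rw [List.idxOf_append_of_mem hxL, List.idxOf_append_of_mem hxL]
      omega
    · rw [List.idxOf_append_of_notMem hxL, List.idxOf_append_of_notMem hxL]
      by_cases hxu : u = x
      · subst hxu
        rw [List.idxOf_cons_self, List.idxOf_cons_ne _ (Ne.symm huv),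
          List.idxOf_cons_self]
        omega
      · by_cases hxv : v = x
        · subst hxv
          rw [List.idxOf_cons_self, List.idxOf_cons_ne _ huv, List.idxOf_cons_self]
          omega
        · rw [List.idxOf_cons_ne _ hxu, List.idxOf_cons_ne _ hxv,
            List.idxOf_cons_ne _ hxv, List.idxOf_cons_ne _ hxu]
          omega

lemma restr_linord {A T : Finset α} (hTA : T ⊆ A) {w : List α}
    (h : IsLinOrd A w) : (restr T w).Nodup ∧ (restr T w).toFinset = T := by
  refine ⟨h.1.filter _, ?_⟩
  ext x
  simp only [restr, List.mem_toFinset, List.mem_filter, decide_eq_true_eq]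
  constructor
  · rintro ⟨_, hxT⟩; exact hxT
  · intro hxT
    refine ⟨?_, hxT⟩
    have hxA : x ∈ A := hTA hxT
    rw [← h.2] at hxA
    exact List.mem_toFinset.mp hxA

end Aux

section Main

variable [DecidableEq α]

lemma mid_witness {A : Finset α} {D : Set (List α)}
    (hlin : ∀ w ∈ D, IsLinOrd A w) (hS : SemiConnected A D)
    {a b c : α} (hab : a ≠ b) (hac : a ≠ c) (hbc : b ≠ c)
    (ha : a ∈ A) (hb : b ∈ A) (hc : c ∈ A) (x : α) (hx : x ∈ ({a,b,c} : Finset α)) :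
    ∃ w ∈ D, (restr {a,b,c} w)[1]? = some x := by
  have hba : b ≠ a := hab.symm
  have hca : c ≠ a := hac.symm
  have hcb : c ≠ b := hbc.symm
  set T : Finset α := {a, b, c} with hT
  have hTA : T ⊆ A := by
    intro y hy
    rw [hT] at hy
    simp only [Finset.mem_insert, Finset.mem_singleton] at hy
    rcases hy with rfl | rfl | rfl <;> assumption
  obtain ⟨w0, ch, hw0D, h0, hN, hmemD, hadj⟩ := hS
  set N := A.card.choose 2 with hNdef
  set f : ℕ → ℕ := fun i => (restr T (ch i)).idxOf x with hf
  have hstep : ∀ i < N, f (i+1) ≤ f i + 1 ∧ f i ≤ f (i+1) + 1 := by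
    intro i hi
    obtain ⟨l, r, u, v, he1, he2⟩ := hadj i hi
    have hnod : (ch i).Nodup := (hlin _ (hmemD i (le_of_lt hi))).1
    have huv : u ≠ v := by
      rw [he1] at hnod
      have h2 := (List.nodup_append.mp hnod).2.1
      have := (List.nodup_cons.mp h2).1
      intro hE; exact this (hE ▸ List.mem_cons_self)
    have hb := indexOf_swap_bound (fun y => decide (y ∈ T)) l r huv x
    show (restr T (ch (i+1))).idxOf x ≤ (restr T (ch i)).idxOf x + 1 ∧
      (restr T (ch i)).idxOf x ≤ (restr T (ch (i+1))).idxOf x + 1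
    rw [he1, he2]
    exact hb
  -- endpoints
  have hr0 := restr_linord hTA (hlin _ hw0D)
  have hsix := sixlist hab hac hbc hr0.1 (by rw [hr0.2])
  have hxabc : x = a ∨ x = b ∨ x = c := by
    rw [hT] at hx; simpa using hx
  have hend : f 0 + f N = 2 := by
    have e0 : f 0 = (restr T w0).idxOf x := by rw [hf]; simp [h0]
    have eN : f N = ((restr T w0).reverse).idxOf x := by
      show (restr T (ch N)).idxOf x = _
      rw [hN]
      show ((w0.reverse).filter _).idxOf x = _
      rw [List.filter_reverse]
      rfl
    rw [e0, eN]
    rcases hsix with h|h|h|h|h|h <;> rw [h] <;>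
      rcases hxabc with rfl|rfl|rfl <;>
      simp [List.idxOf_cons, hab, hac, hbc, hba, hca, hcb]
  obtain ⟨i, hiN, hfi⟩ := nat_ivt f 1 N hstep (by omega)
  refine ⟨ch i, hmemD i hiN, ?_⟩
  have hri := restr_linord hTA (hlin _ (hmemD i hiN))
  have hxmem : x ∈ restr T (ch i) := by
    rw [← List.mem_toFinset, hri.2]
    exact hx
  have := List.getElem?_idxOf hxmem
  rw [show (restr T (ch i)).idxOf x = 1 from hfi] at this
  exact this

end Main

section Main2

variable [DecidableEq α]

lemma full_lt {A : Finset α} {w : List α} (h : IsLinOrd A w) (T : Finset α)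
    {u v : α} (hu : u ∈ T) (hv : v ∈ T) (huA : u ∈ A) (hvA : v ∈ A)
    (hlt : (restr T w).idxOf u < (restr T w).idxOf v) :
    w.idxOf u < w.idxOf v := by
  have huw : u ∈ w := List.mem_toFinset.mp (h.2 ▸ huA)
  have hvw : v ∈ w := List.mem_toFinset.mp (h.2 ▸ hvA)
  exact idx_filter_lt (p := fun y => decide (y ∈ T)) (decide_eq_true hu) (decide_eq_true hv) h.1 huw hvw hlt

lemma cyclic_contra {A : Finset α} {D : Set (List α)} (hC : IsCondorcet A D)
    {a b c : α} (ha : a ∈ A) (hb : b ∈ A) (hc : c ∈ A)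
    (hab : a ≠ b) (hac : a ≠ c) (hbc : b ≠ c)
    {w1 w2 w3 : List α} (h1 : w1 ∈ D) (h2 : w2 ∈ D) (h3 : w3 ∈ D)
    (hr1 : restr {a, b, c} w1 = [a, b, c]) (hr2 : restr {a, b, c} w2 = [b, c, a])
    (hr3 : restr {a, b, c} w3 = [c, a, b]) : False := by
  have hba : b ≠ a := hab.symm
  have hca : c ≠ a := hac.symm
  have hcb : c ≠ b := hbc.symm
  set T : Finset α := {a, b, c} with hT
  have hamem : a ∈ T := by simp [hT]
  have hbmem : b ∈ T := by simp [hT]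
  have hcmem : c ∈ T := by simp [hT]
  have hl1 := hC.1 w1 h1
  have hl2 := hC.1 w2 h2
  have hl3 := hC.1 w3 h3
  -- order facts
  have o1ab : w1.idxOf a < w1.idxOf b :=
    full_lt hl1 T hamem hbmem ha hb (by rw [hr1]; simp [List.idxOf_cons, hab, hac, hbc, hba, hca, hcb])
  have o1bc : w1.idxOf b < w1.idxOf c :=
    full_lt hl1 T hbmem hcmem hb hc (by rw [hr1]; simp [List.idxOf_cons, hab, hac, hbc, hba, hca, hcb])
  have o2bc : w2.idxOf b < w2.idxOf c :=
    full_lt hl2 T hbmem hcmem hb hc (by rw [hr2]; simp [List.idxOf_cons, hab, hac, hbc, hba, hca, hcb])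
  have o2ca : w2.idxOf c < w2.idxOf a :=
    full_lt hl2 T hcmem hamem hc ha (by rw [hr2]; simp [List.idxOf_cons, hab, hac, hbc, hba, hca, hcb])
  have o3ca : w3.idxOf c < w3.idxOf a :=
    full_lt hl3 T hcmem hamem hc ha (by rw [hr3]; simp [List.idxOf_cons, hab, hac, hbc, hba, hca, hcb])
  have o3ab : w3.idxOf a < w3.idxOf b :=
    full_lt hl3 T hamem hbmem ha hb (by rw [hr3]; simp [List.idxOf_cons, hab, hac, hbc, hba, hca, hcb])
  have o2ba : w2.idxOf b < w2.idxOf a := lt_trans o2bc o2ca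
  have o1ac : w1.idxOf a < w1.idxOf c := lt_trans o1ab o1bc
  have o3cb : w3.idxOf c < w3.idxOf b := lt_trans o3ca o3ab
  have n1 : ¬ w1.idxOf b < w1.idxOf a := by omega
  have n2 : ¬ w2.idxOf a < w2.idxOf b := by omega
  have n3 : ¬ w3.idxOf b < w3.idxOf a := by omega
  have m1 : ¬ w1.idxOf c < w1.idxOf b := by omega
  have m2 : ¬ w2.idxOf c < w2.idxOf b := by omega
  have m3 : ¬ w3.idxOf b < w3.idxOf c := by omega
  have k1 : ¬ w1.idxOf c < w1.idxOf a := by omega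
  have k2 : ¬ w2.idxOf a < w2.idxOf c := by omega
  have k3 : ¬ w3.idxOf a < w3.idxOf c := by omega
  set P : List (List α) := [w1, w2, w3] with hP
  have hPD : ∀ w ∈ P, w ∈ D := by
    intro w hw
    rw [hP] at hw
    simp only [List.mem_cons, List.not_mem_nil, or_false] at hw
    rcases hw with rfl | rfl | rfl <;> assumption
  have hodd : Odd P.length := by rw [hP]; exact ⟨1, by norm_num⟩
  have hMab : Maj P a b := by
    simp only [Maj, hP, List.countP_cons, List.countP_nil]
    simp [o1ab, o3ab, o2ba, n1, n2, n3]
  have hMbc : Maj P b c := by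
    simp only [Maj, hP, List.countP_cons, List.countP_nil]
    simp [o1bc, o2bc, o3cb, m1, m2, m3]
  have hMca : Maj P c a := by
    simp only [Maj, hP, List.countP_cons, List.countP_nil]
    simp [o2ca, o3ca, o1ac, k1, k2, k3]
  have hMac : Maj P a c := hC.2 P hPD hodd a ha b hb c hc hMab hMbc
  simp only [Maj, gt_iff_lt] at hMac hMca
  omega

end Main2

lemma cover_lemma {p1 p2 p3 p4 p5 p6 : Prop}
    (hTa : p1 ∨ p2) (hTb : p3 ∨ p4) (hTc : p5 ∨ p6)
    (hMa : p3 ∨ p5) (hMb : p1 ∨ p6) (hMc : p2 ∨ p4)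
    (hBa : p4 ∨ p6) (hBb : p2 ∨ p5) (hBc : p1 ∨ p3) :
    (p1 ∧ p4 ∧ p5) ∨ (p2 ∧ p3 ∧ p6) := by
  tauto

/-- every semi-connected Condorcet domain of maximal width is a
peak-pit domain. -/
theorem stmt_12 [DecidableEq α] (A : Finset α) (D : Set (List α))
    (hC : IsCondorcet A D) (hW : MaxWidth D) (hS : SemiConnected A D) :
    PeakPit A D := by
  intro a ha b hb c hc hab hac hbc
  by_contra hcon
  push_neg at hcon
  have hba : b ≠ a := hab.symm
  have hca : c ≠ a := hac.symm
  have hcb : c ≠ b := hbc.symm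
  have hlin := hC.1
  have hTA : ({a, b, c} : Finset α) ⊆ A := by
    intro y hy
    simp only [Finset.mem_insert, Finset.mem_singleton] at hy
    rcases hy with rfl | rfl | rfl <;> assumption
  have hsixof : ∀ w ∈ D, restr {a,b,c} w = [a,b,c] ∨ restr {a,b,c} w = [a,c,b] ∨
      restr {a,b,c} w = [b,a,c] ∨ restr {a,b,c} w = [b,c,a] ∨
      restr {a,b,c} w = [c,a,b] ∨ restr {a,b,c} w = [c,b,a] := fun w hw =>
    sixlist hab hac hbc (restr_linord hTA (hlin w hw)).1 (restr_linord hTA (hlin w hw)).2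
  have hwit : ∀ x ∈ ({a, b, c} : Finset α),
      (∃ w ∈ D, (restr {a,b,c} w)[0]? = some x) ∧
      (∃ w ∈ D, (restr {a,b,c} w)[1]? = some x) ∧
      (∃ w ∈ D, (restr {a,b,c} w)[2]? = some x) := by
    intro x hx
    refine ⟨?_, mid_witness hlin hS hab hac hbc ha hb hc x hx, ?_⟩
    · have h := (hcon x hx).1
      simp only [Never] at h
      push_neg at h
      simpa using h
    · have h := (hcon x hx).2
      simp only [Never] at h
      push_neg at h
      simpa using h
  have hamem : a ∈ ({a, b, c} : Finset α) := by simp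
  have hbmem : b ∈ ({a, b, c} : Finset α) := by simp
  have hcmem : c ∈ ({a, b, c} : Finset α) := by simp
  have hTa : (∃ w ∈ D, restr {a,b,c} w = [a,b,c]) ∨ (∃ w ∈ D, restr {a,b,c} w = [a,c,b]) := by
    obtain ⟨w, hwD, hget⟩ := (hwit a hamem).1
    rcases hsixof w hwD with h|h|h|h|h|h <;>
      first
        | exact Or.inl ⟨w, hwD, h⟩
        | exact Or.inr ⟨w, hwD, h⟩
        | (rw [h] at hget; simp [hab, hac, hbc, hba, hca, hcb] at hget)
  have hTb : (∃ w ∈ D, restr {a,b,c} w = [b,a,c]) ∨ (∃ w ∈ D, restr {a,b,c} w = [b,c,a]) := by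
    obtain ⟨w, hwD, hget⟩ := (hwit b hbmem).1
    rcases hsixof w hwD with h|h|h|h|h|h <;>
      first
        | exact Or.inl ⟨w, hwD, h⟩
        | exact Or.inr ⟨w, hwD, h⟩
        | (rw [h] at hget; simp [hab, hac, hbc, hba, hca, hcb] at hget)
  have hTc : (∃ w ∈ D, restr {a,b,c} w = [c,a,b]) ∨ (∃ w ∈ D, restr {a,b,c} w = [c,b,a]) := by
    obtain ⟨w, hwD, hget⟩ := (hwit c hcmem).1
    rcases hsixof w hwD with h|h|h|h|h|h <;>
      first
        | exact Or.inl ⟨w, hwD, h⟩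
        | exact Or.inr ⟨w, hwD, h⟩
        | (rw [h] at hget; simp [hab, hac, hbc, hba, hca, hcb] at hget)
  have hMa : (∃ w ∈ D, restr {a,b,c} w = [b,a,c]) ∨ (∃ w ∈ D, restr {a,b,c} w = [c,a,b]) := by
    obtain ⟨w, hwD, hget⟩ := (hwit a hamem).2.1
    rcases hsixof w hwD with h|h|h|h|h|h <;>
      first
        | exact Or.inl ⟨w, hwD, h⟩
        | exact Or.inr ⟨w, hwD, h⟩
        | (rw [h] at hget; simp [hab, hac, hbc, hba, hca, hcb] at hget)
  have hMb : (∃ w ∈ D, restr {a,b,c} w = [a,b,c]) ∨ (∃ w ∈ D, restr {a,b,c} w = [c,b,a]) := by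
    obtain ⟨w, hwD, hget⟩ := (hwit b hbmem).2.1
    rcases hsixof w hwD with h|h|h|h|h|h <;>
      first
        | exact Or.inl ⟨w, hwD, h⟩
        | exact Or.inr ⟨w, hwD, h⟩
        | (rw [h] at hget; simp [hab, hac, hbc, hba, hca, hcb] at hget)
  have hMc : (∃ w ∈ D, restr {a,b,c} w = [a,c,b]) ∨ (∃ w ∈ D, restr {a,b,c} w = [b,c,a]) := by
    obtain ⟨w, hwD, hget⟩ := (hwit c hcmem).2.1
    rcases hsixof w hwD with h|h|h|h|h|h <;>
      first
        | exact Or.inl ⟨w, hwD, h⟩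
        | exact Or.inr ⟨w, hwD, h⟩
        | (rw [h] at hget; simp [hab, hac, hbc, hba, hca, hcb] at hget)
  have hBa : (∃ w ∈ D, restr {a,b,c} w = [b,c,a]) ∨ (∃ w ∈ D, restr {a,b,c} w = [c,b,a]) := by
    obtain ⟨w, hwD, hget⟩ := (hwit a hamem).2.2
    rcases hsixof w hwD with h|h|h|h|h|h <;>
      first
        | exact Or.inl ⟨w, hwD, h⟩
        | exact Or.inr ⟨w, hwD, h⟩
        | (rw [h] at hget; simp [hab, hac, hbc, hba, hca, hcb] at hget)
  have hBb : (∃ w ∈ D, restr {a,b,c} w = [a,c,b]) ∨ (∃ w ∈ D, restr {a,b,c} w = [c,a,b]) := by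
    obtain ⟨w, hwD, hget⟩ := (hwit b hbmem).2.2
    rcases hsixof w hwD with h|h|h|h|h|h <;>
      first
        | exact Or.inl ⟨w, hwD, h⟩
        | exact Or.inr ⟨w, hwD, h⟩
        | (rw [h] at hget; simp [hab, hac, hbc, hba, hca, hcb] at hget)
  have hBc : (∃ w ∈ D, restr {a,b,c} w = [a,b,c]) ∨ (∃ w ∈ D, restr {a,b,c} w = [b,a,c]) := by
    obtain ⟨w, hwD, hget⟩ := (hwit c hcmem).2.2
    rcases hsixof w hwD with h|h|h|h|h|h <;>
      first
        | exact Or.inl ⟨w, hwD, h⟩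
        | exact Or.inr ⟨w, hwD, h⟩
        | (rw [h] at hget; simp [hab, hac, hbc, hba, hca, hcb] at hget)
  have hconc : ((∃ w ∈ D, restr {a,b,c} w = [a,b,c]) ∧ (∃ w ∈ D, restr {a,b,c} w = [b,c,a]) ∧
      (∃ w ∈ D, restr {a,b,c} w = [c,a,b])) ∨
      ((∃ w ∈ D, restr {a,b,c} w = [a,c,b]) ∧ (∃ w ∈ D, restr {a,b,c} w = [b,a,c]) ∧
      (∃ w ∈ D, restr {a,b,c} w = [c,b,a])) :=
    cover_lemma hTa hTb hTc hMa hMb hMc hBa hBb hBc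
  rcases hconc with ⟨⟨w1, h1, hr1⟩, ⟨w2, h2, hr2⟩, ⟨w3, h3, hr3⟩⟩ |
    ⟨⟨w1, h1, hr1⟩, ⟨w2, h2, hr2⟩, ⟨w3, h3, hr3⟩⟩
  · exact cyclic_contra hC ha hb hc hab hac hbc h1 h2 h3 hr1 hr2 hr3
  · have hsetE : ({a, c, b} : Finset α) = {a, b, c} := by
      ext y
      simp only [Finset.mem_insert, Finset.mem_singleton]
      constructor <;> rintro (rfl | rfl | rfl) <;> simp
    refine cyclic_contra hC ha hc hb hac hab hcb h1 h3 h2 ?_ ?_ ?_ <;>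
      rw [show restr {a, c, b} = restr {a, b, c} from by rw [hsetE]]
    · exact hr1
    · exact hr3
    · exact hr2
end
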